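/- arXiv:2506.07241 — 6 statements merged into one kernel-verified Lean document; each statement's English description precedes it below -/
import Mathlib

section
/- Let m ≥ 1 and let Q ⊆ ℝ^m be a nonempty finite intersection of closed affine halfspaces such that Q has nonempty interior, Q is unbounded, and Q contains no affine line. Then the one-point compactification OnePoint(Q) of Q (with its subspace topology) is homeomorphic to the closed unit ball {x ∈ ℝ^m : ‖x‖ ≤ 1}. -/
open Filter Topology Metric Set Bornology
open scoped RealInnerProductSpace

noncomputable section PolyOnePoint

variable {E : Type*} [NormedAddCommGroup E] [InnerProductSpace ℝ E]

namespace PolyOnePoint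

variable (c x₀ q : E)

/-- projective map sending `Q` to a bounded convex set -/
def gm (x : E) : E := (1 + ⟪c, x - x₀⟫)⁻¹ • (x - x₀)

/-- inverse of `gm` on `{y | ⟪c,y⟫ < 1}` -/
def gm' (y : E) : E := x₀ + (1 - ⟪c, y⟫)⁻¹ • y

/-- collapse map squeezing the face `{⟪c,y⟫ = 1}` to the point `q` -/
def hm (y : E) : E := (1 - ⟪c, y⟫) • (y - ⟪c, y⟫ • q) + ⟪c, y⟫ • q

/-- inverse of `hm` on `{y | ⟪c,y⟫ < 1}` -/
def hm' (y : E) : E := (1 - ⟪c, y⟫)⁻¹ • (y - ⟪c, y⟫ • q) + ⟪c, y⟫ • q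

variable {c x₀ q}

lemma inner_gm (x : E) : ⟪c, gm c x₀ x⟫ = (1 + ⟪c, x - x₀⟫)⁻¹ * ⟪c, x - x₀⟫ :=
  real_inner_smul_right _ _ _

lemma one_sub_inner_gm {x : E} (hx : 1 + ⟪c, x - x₀⟫ ≠ 0) :
    1 - ⟪c, gm c x₀ x⟫ = (1 + ⟪c, x - x₀⟫)⁻¹ := by
  rw [inner_gm]; field_simp; ring

lemma inner_gm_lt_one {x : E} (hx : 0 < 1 + ⟪c, x - x₀⟫) : ⟪c, gm c x₀ x⟫ < 1 := by
  have h2 := one_sub_inner_gm (x := x) (c := c) (x₀ := x₀) hx.ne'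
  nlinarith [inv_pos.2 hx]

lemma gm'_gm {x : E} (hx : 0 < 1 + ⟪c, x - x₀⟫) : gm' c x₀ (gm c x₀ x) = x := by
  rw [gm', one_sub_inner_gm hx.ne', inv_inv, gm, smul_smul,
    mul_inv_cancel₀ hx.ne', one_smul]
  abel

lemma inner_gm' (y : E) : ⟪c, gm' c x₀ y - x₀⟫ = (1 - ⟪c, y⟫)⁻¹ * ⟪c, y⟫ := by
  simp [gm', real_inner_smul_right]

lemma one_add_inner_gm' {y : E} (hy : ⟪c, y⟫ < 1) :
    1 + ⟪c, gm' c x₀ y - x₀⟫ = (1 - ⟪c, y⟫)⁻¹ := by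
  rw [inner_gm']
  have h : (1:ℝ) - ⟪c, y⟫ ≠ 0 := by linarith
  field_simp
  ring

lemma gm_gm' {y : E} (hy : ⟪c, y⟫ < 1) : gm c x₀ (gm' c x₀ y) = y := by
  have h : (1:ℝ) - ⟪c, y⟫ ≠ 0 := by linarith
  rw [gm, one_add_inner_gm' hy, inv_inv, gm', add_sub_cancel_left, smul_smul]
  match_scalars
  field_simp

lemma inner_hm (hq : ⟪c, q⟫ = 1) (y : E) : ⟪c, hm c q y⟫ = ⟪c, y⟫ := by
  simp [hm, inner_add_right, inner_sub_right, real_inner_smul_right, hq]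

lemma inner_hm' (hq : ⟪c, q⟫ = 1) (y : E) : ⟪c, hm' c q y⟫ = ⟪c, y⟫ := by
  simp [hm', inner_add_right, inner_sub_right, real_inner_smul_right, hq]

lemma hm'_hm (hq : ⟪c, q⟫ = 1) {y : E} (hy : ⟪c, y⟫ < 1) :
    hm' c q (hm c q y) = y := by
  have h : (1:ℝ) - ⟪c, y⟫ ≠ 0 := by linarith
  rw [hm', inner_hm hq, hm]
  match_scalars <;> field_simp
  ring

lemma hm_hm' (hq : ⟪c, q⟫ = 1) {y : E} (hy : ⟪c, y⟫ < 1) :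
    hm c q (hm' c q y) = y := by
  have h : (1:ℝ) - ⟪c, y⟫ ≠ 0 := by linarith
  rw [hm, inner_hm' hq, hm']
  match_scalars <;> field_simp
  ring

lemma hm_of_inner_one (hy : ⟪c, y⟫ = 1) : hm c q y = q := by
  simp [hm, hy]

lemma continuous_inner_right : Continuous fun y : E => ⟪c, y⟫ :=
  continuous_const.inner continuous_id

lemma continuous_hm : Continuous (hm c q) := by
  exact ((continuous_const.sub continuous_inner_right).smul
      (continuous_id.sub (continuous_inner_right.smul continuous_const))).add
    (continuous_inner_right.smul continuous_const)

lemma continuousAt_hm' {y : E} (hy : ⟪c, y⟫ < 1) : ContinuousAt (hm' c q) y := by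
  have h : (1:ℝ) - ⟪c, y⟫ ≠ 0 := by linarith
  exact (((continuousAt_const.sub continuous_inner_right.continuousAt).inv₀ h).smul
      (continuousAt_id.sub (continuous_inner_right.continuousAt.smul continuousAt_const))).add
    (continuous_inner_right.continuousAt.smul continuousAt_const)

lemma continuousAt_gm' {y : E} (hy : ⟪c, y⟫ < 1) : ContinuousAt (gm' c x₀) y := by
  have h : (1:ℝ) - ⟪c, y⟫ ≠ 0 := by linarith
  exact continuousAt_const.add
    (((continuousAt_const.sub continuous_inner_right.continuousAt).inv₀ h).smul continuousAt_id)

lemma continuousAt_gm {x : E} (hx : 1 + ⟪c, x - x₀⟫ ≠ 0) : ContinuousAt (gm c x₀) x := by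
  exact ((continuousAt_const.add
      ((continuous_const.inner (continuous_id.sub continuous_const)).continuousAt)).inv₀ hx).smul
    (continuousAt_id.sub continuousAt_const)


lemma gm_combo {x1 x2 : E} (h1 : 0 < 1 + ⟪c, x1 - x₀⟫) (h2 : 0 < 1 + ⟪c, x2 - x₀⟫)
    {t1 t2 : ℝ} (ht1 : 0 ≤ t1) (ht2 : 0 ≤ t2) (hsum : t1 + t2 = 1) :
    ∃ μ1 μ2 : ℝ, 0 ≤ μ1 ∧ 0 ≤ μ2 ∧ μ1 + μ2 = 1 ∧
      gm c x₀ (μ1 • x1 + μ2 • x2) = t1 • gm c x₀ x1 + t2 • gm c x₀ x2 := by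
  have ht2' : t2 = 1 - t1 := by linarith
  subst ht2'
  obtain ⟨l1, hl1⟩ : ∃ l1 : ℝ, l1 = ⟪c, x1 - x₀⟫ := ⟨_, rfl⟩
  obtain ⟨l2, hl2⟩ : ∃ l2 : ℝ, l2 = ⟪c, x2 - x₀⟫ := ⟨_, rfl⟩
  rw [← hl1] at h1
  rw [← hl2] at h2
  have hne1 : (1 + l1) ≠ 0 := ne_of_gt h1
  have hne2 : (1 + l2) ≠ 0 := ne_of_gt h2
  have hEpos : 0 < t1 * (1 + l2) + (1 - t1) * (1 + l1) := by
    rcases eq_or_lt_of_le ht1 with h | h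
    · rw [← h]; simpa using h1
    · have hp1 : 0 < t1 * (1 + l2) := mul_pos h h2
      have hp2 : 0 ≤ (1 - t1) * (1 + l1) := mul_nonneg ht2 h1.le
      linarith
  have hEne : t1 * (1 + l2) + (1 - t1) * (1 + l1) ≠ 0 := hEpos.ne'
  have hDpos : 0 < t1 * (1 + l1)⁻¹ + (1 - t1) * (1 + l2)⁻¹ := by
    have : t1 * (1 + l1)⁻¹ + (1 - t1) * (1 + l2)⁻¹
        = (t1 * (1 + l2) + (1 - t1) * (1 + l1)) * ((1 + l1)⁻¹ * (1 + l2)⁻¹) := by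
      field_simp
    rw [this]
    exact mul_pos hEpos (mul_pos (inv_pos.2 h1) (inv_pos.2 h2))
  have hDne := hDpos.ne'
  obtain ⟨μ1, hμ1⟩ : ∃ μ1 : ℝ,
      μ1 = t1 * (1 + l1)⁻¹ / (t1 * (1 + l1)⁻¹ + (1 - t1) * (1 + l2)⁻¹) := ⟨_, rfl⟩
  obtain ⟨μ2, hμ2⟩ : ∃ μ2 : ℝ,
      μ2 = (1 - t1) * (1 + l2)⁻¹ / (t1 * (1 + l1)⁻¹ + (1 - t1) * (1 + l2)⁻¹) := ⟨_, rfl⟩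
  have hμsum : μ1 + μ2 = 1 := by rw [hμ1, hμ2, ← add_div]; exact div_self hDne
  have hμ1val : (t1 * (1 + l1)⁻¹ + (1 - t1) * (1 + l2)⁻¹) * μ1 = t1 * (1 + l1)⁻¹ := by
    rw [hμ1, mul_div_assoc', mul_div_right_comm, div_self hDne, one_mul]
  have hμ2val : (t1 * (1 + l1)⁻¹ + (1 - t1) * (1 + l2)⁻¹) * μ2 = (1 - t1) * (1 + l2)⁻¹ := by
    rw [hμ2, mul_div_assoc', mul_div_right_comm, div_self hDne, one_mul]
  refine ⟨μ1, μ2, by rw [hμ1]; exact div_nonneg (mul_nonneg ht1 (inv_pos.2 h1).le) hDpos.le,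
    by rw [hμ2]; exact div_nonneg (mul_nonneg ht2 (inv_pos.2 h2).le) hDpos.le, hμsum, ?_⟩
  have hsub : μ1 • x1 + μ2 • x2 - x₀ = μ1 • (x1 - x₀) + μ2 • (x2 - x₀) := by
    match_scalars <;> linarith
  have hinner : ⟪c, μ1 • x1 + μ2 • x2 - x₀⟫ = μ1 * l1 + μ2 * l2 := by
    rw [hsub, inner_add_right, real_inner_smul_right, real_inner_smul_right, ← hl1, ← hl2]
  have hkey : 1 + ⟪c, μ1 • x1 + μ2 • x2 - x₀⟫
      = (t1 * (1 + l1)⁻¹ + (1 - t1) * (1 + l2)⁻¹)⁻¹ := by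
    rw [hinner]
    apply eq_inv_of_mul_eq_one_left
    have h1' : (1 + l1) * (1 + l1)⁻¹ = 1 := mul_inv_cancel₀ hne1
    have h2' : (1 + l2) * (1 + l2)⁻¹ = 1 := mul_inv_cancel₀ hne2
    linear_combination (-(t1 * (1 + l1)⁻¹ + (1 - t1) * (1 + l2)⁻¹)) * hμsum + (1 + l1) * hμ1val + (1 + l2) * hμ2val + t1 * h1' + (1 - t1) * h2'
  rw [gm, hkey, inv_inv, gm, gm, ← hl1, ← hl2, hsub, smul_add, smul_smul, smul_smul,
    hμ1val, hμ2val, smul_smul, smul_smul]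

lemma hm_combo (hq : ⟪c, q⟫ = 1) {y : E} {t s lam : ℝ} (hs : s = ⟪c, y⟫)
    (hts : 1 - t * s ≠ 0) (hlam : lam = (1 - t) / (1 - t * s)) :
    hm c q (lam • ((t * s ^ 2) • q) + (1 - lam) • y) = t • hm c q y := by
  have hin : ⟪c, lam • ((t * s ^ 2) • q) + (1 - lam) • y⟫ = t * s := by
    rw [inner_add_right, real_inner_smul_right, real_inner_smul_right, real_inner_smul_right,
      hq, ← hs, hlam]
    field_simp
    ring
  rw [hm, hin, hm, ← hs, hlam]
  match_scalars <;> field_simp <;> ring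

lemma inner_combo (hq : ⟪c, q⟫ = 1) {y : E} {t s lam : ℝ} (hs : s = ⟪c, y⟫)
    (hts : 1 - t * s ≠ 0) (hlam : lam = (1 - t) / (1 - t * s)) :
    ⟪c, lam • ((t * s ^ 2) • q) + (1 - lam) • y⟫ = t * s := by
  rw [inner_add_right, real_inner_smul_right, real_inner_smul_right, real_inner_smul_right,
    hq, ← hs, hlam]
  field_simp
  ring

lemma hm_sub_q (hq : ⟪c, q⟫ = 1) (y : E) :
    hm c q y - q = (1 - ⟪c, y⟫) • (y - ⟪c, y⟫ • q - q) := by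
  rw [hm]
  match_scalars <;> ring

end PolyOnePoint

section StarPart

variable {E : Type*} [NormedAddCommGroup E] [NormedSpace ℝ E]

namespace PolyOnePoint

/-- radial function of a set `L` viewed from the origin -/
def rho (L : Set E) (y : E) : ℝ := sSup {r : ℝ | 0 ≤ r ∧ r • (‖y‖⁻¹ • y) ∈ L}

/-- For a compact set `L` which is strictly star-shaped about `0 ∈ interior L`, there is a
map `Ψ`, continuous at every point of `L`, restricting to a bijection `L ≃ closed unit ball`. -/
theorem star_embed (L : Set E) (hLcomp : IsCompact L) (h0 : (0:E) ∈ interior L)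
    (hstar : ∀ p ∈ L, ∀ t : ℝ, 0 < t → t < 1 → t • p ∈ interior L) :
    ∃ Ψ : E → E, (∀ y ∈ L, ContinuousAt Ψ y) ∧ Set.InjOn Ψ L ∧
      Ψ '' L = {x : E | ‖x‖ ≤ 1} := by
  have hLc : IsClosed L := hLcomp.isClosed
  have hL0 : (0:E) ∈ L := interior_subset h0
  obtain ⟨CL, hCL⟩ : ∃ C : ℝ, ∀ y ∈ L, ‖y‖ ≤ C := by
    obtain ⟨C, hC⟩ := (hLcomp.isBounded).exists_norm_le
    exact ⟨C, hC⟩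
  obtain ⟨r₀, hr₀pos, hr₀⟩ : ∃ r > (0:ℝ), ball (0:E) r ⊆ L :=
    Metric.mem_nhds_iff.1 (mem_interior_iff_mem_nhds.1 h0)
  -- closed star-shapedness
  have hstar' : ∀ p ∈ L, ∀ t : ℝ, 0 ≤ t → t ≤ 1 → t • p ∈ L := by
    intro p hp t ht0 ht1
    rcases eq_or_lt_of_le ht0 with h | h
    · simpa [← h] using hL0
    rcases eq_or_lt_of_le ht1 with h1 | h1
    · simpa [h1] using hp
    exact interior_subset (hstar p hp t h h1)
  -- basic facts about rho
  have hunit : ∀ y : E, y ≠ 0 → ‖(‖y‖⁻¹ • y)‖ = 1 := fun y hy => norm_smul_inv_norm hy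
  have hRne : ∀ y : E, (0:ℝ) ∈ {r : ℝ | 0 ≤ r ∧ r • (‖y‖⁻¹ • y) ∈ L} := by
    intro y; exact ⟨le_refl 0, by simpa using hL0⟩
  have hRbdd : ∀ y : E, y ≠ 0 → BddAbove {r : ℝ | 0 ≤ r ∧ r • (‖y‖⁻¹ • y) ∈ L} := by
    intro y hy
    refine ⟨CL, fun r hr => ?_⟩
    have : ‖r • (‖y‖⁻¹ • y)‖ ≤ CL := hCL _ hr.2
    rwa [norm_smul, hunit y hy, mul_one, Real.norm_eq_abs, abs_of_nonneg hr.1] at this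
  have hRclosed : ∀ y : E, IsClosed {r : ℝ | 0 ≤ r ∧ r • (‖y‖⁻¹ • y) ∈ L} := by
    intro y
    exact (isClosed_le continuous_const continuous_id).inter
      (hLc.preimage (continuous_id.smul continuous_const))
  have hρmem : ∀ y : E, y ≠ 0 → 0 ≤ rho L y ∧ rho L y • (‖y‖⁻¹ • y) ∈ L := by
    intro y hy
    exact (hRclosed y).csSup_mem ⟨0, hRne y⟩ (hRbdd y hy)
  have hρge : ∀ y : E, y ≠ 0 → r₀ / 2 ≤ rho L y := by
    intro y hy
    refine le_csSup (hRbdd y hy) ⟨by linarith, hr₀ ?_⟩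
    rw [mem_ball_zero_iff, norm_smul, hunit y hy, mul_one, Real.norm_eq_abs,
      abs_of_nonneg (by linarith)]
    linarith
  have hρpos : ∀ y : E, y ≠ 0 → 0 < rho L y := fun y hy => lt_of_lt_of_le (by linarith) (hρge y hy)
  -- membership characterizations
  have hmem_of_le : ∀ y : E, y ≠ 0 → ∀ a : ℝ, 0 ≤ a → a ≤ rho L y → a • (‖y‖⁻¹ • y) ∈ L := by
    intro y hy a ha hale
    have hρ := hρpos y hy
    have := hstar' _ (hρmem y hy).2 (a / rho L y) (by positivity) (by
      rw [div_le_one hρ]; exact hale)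
    rwa [smul_smul, div_mul_cancel₀ _ hρ.ne'] at this
  have hint_of_lt : ∀ y : E, y ≠ 0 → ∀ a : ℝ, 0 ≤ a → a < rho L y →
      a • (‖y‖⁻¹ • y) ∈ interior L := by
    intro y hy a ha halt
    rcases eq_or_lt_of_le ha with h | h
    · simpa [← h] using h0
    have hρ := hρpos y hy
    have := hstar _ (hρmem y hy).2 (a / rho L y) (by positivity) (by
      rw [div_lt_one hρ]; exact halt)
    rwa [smul_smul, div_mul_cancel₀ _ hρ.ne'] at this
  have hle_of_mem : ∀ y : E, y ≠ 0 → ∀ a : ℝ, 0 ≤ a → a • (‖y‖⁻¹ • y) ∈ L → a ≤ rho L y := by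
    intro y hy a ha hmem
    exact le_csSup (hRbdd y hy) ⟨ha, hmem⟩
  have hlt_of_int : ∀ y : E, y ≠ 0 → ∀ a : ℝ, 0 ≤ a → a • (‖y‖⁻¹ • y) ∈ interior L →
      a < rho L y := by
    intro y hy a ha hmem
    obtain ⟨ε, hεpos, hε⟩ := Metric.mem_nhds_iff.1 (mem_interior_iff_mem_nhds.1 hmem)
    have hmem2 : (a + ε/2) • (‖y‖⁻¹ • y) ∈ L := by
      apply hε
      rw [mem_ball_iff_norm, ← sub_smul, add_sub_cancel_left, norm_smul, hunit y hy, mul_one,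
        Real.norm_eq_abs, abs_of_nonneg (by positivity)]
      linarith
    have := hle_of_mem y hy (a + ε/2) (by positivity) hmem2
    linarith
  -- invariance of rho under positive scaling
  have hρinv : ∀ y : E, y ≠ 0 → ∀ k : ℝ, 0 < k → rho L (k • y) = rho L y := by
    intro y hy k hk
    have hny : ‖y‖ ≠ 0 := norm_ne_zero_iff.2 hy
    have : ‖k • y‖⁻¹ • (k • y) = ‖y‖⁻¹ • y := by
      rw [norm_smul, Real.norm_eq_abs, abs_of_pos hk, smul_smul]
      match_scalars
      field_simp
    unfold rho
    rw [this]
  -- continuity of rho off 0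
  have hρcont : ∀ y : E, y ≠ 0 → ContinuousAt (rho L) y := by
    intro y hy
    have hunitcont : ContinuousAt (fun z : E => ‖z‖⁻¹ • z) y :=
      ((continuousAt_id.norm.inv₀ (norm_ne_zero_iff.2 hy)).smul continuousAt_id)
    have hne : ∀ᶠ z in 𝓝 y, z ≠ 0 := (isOpen_compl_singleton (x := (0:E))).eventually_mem hy
    rw [ContinuousAt]
    refine tendsto_order.2 ⟨?_, ?_⟩
    · intro a ha
      rcases lt_or_ge a (r₀/2) with h | h
      · filter_upwards [hne] with z hz
        exact lt_of_lt_of_le h (hρge z hz)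
      · have ha0 : 0 ≤ a := le_trans (by positivity) h
        have hintmem : a • (‖y‖⁻¹ • y) ∈ interior L := hint_of_lt y hy a ha0 ha
        have hcont : ContinuousAt (fun z : E => a • (‖z‖⁻¹ • z)) y :=
          continuousAt_const.smul hunitcont
        have hev : ∀ᶠ z in 𝓝 y, a • (‖z‖⁻¹ • z) ∈ interior L :=
          hcont.eventually_mem (isOpen_interior.mem_nhds hintmem)
        filter_upwards [hne, hev] with z hz hz2
        exact hlt_of_int z hz a ha0 hz2
    · intro b hb
      set a := (rho L y + b) / 2 with hadef
      have ha1 : rho L y < a := by rw [hadef]; linarith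
      have ha2 : a < b := by rw [hadef]; linarith
      have ha0 : 0 ≤ a := le_trans (hρmem y hy).1 ha1.le
      have hnotmem : a • (‖y‖⁻¹ • y) ∉ L := fun hmem => absurd (hle_of_mem y hy a ha0 hmem)
        (not_le.2 ha1)
      have hcont : ContinuousAt (fun z : E => a • (‖z‖⁻¹ • z)) y :=
        continuousAt_const.smul hunitcont
      have hev : ∀ᶠ z in 𝓝 y, a • (‖z‖⁻¹ • z) ∈ Lᶜ :=
        hcont.eventually_mem (hLc.isOpen_compl.mem_nhds hnotmem)
      filter_upwards [hne, hev] with z hz hz2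
      have : ¬ (a ≤ rho L z) := fun hle => hz2 (hmem_of_le z hz a ha0 hle)
      linarith [not_le.1 this]
  -- the map
  refine ⟨fun y => (rho L y)⁻¹ • y, ?_, ?_, ?_⟩
  · -- continuity on L
    intro y hyL
    rcases eq_or_ne y 0 with rfl | hy
    · -- continuity at 0
      have h00 : (rho L (0:E))⁻¹ • (0:E) = 0 := smul_zero _
      refine Metric.continuousAt_iff.2 fun ε hε => ⟨r₀/2 * ε, mul_pos (by linarith) hε, fun {z} hz => ?_⟩
      rw [dist_eq_norm, h00, sub_zero]
      rcases eq_or_ne z 0 with rfl | hz0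
      · simpa using hε
      · have h1 : (rho L z)⁻¹ ≤ (r₀/2)⁻¹ :=
          inv_anti₀ (by linarith) (hρge z hz0)
        have h2 : ‖(rho L z)⁻¹ • z‖ = (rho L z)⁻¹ * ‖z‖ := by
          rw [norm_smul, Real.norm_eq_abs, abs_of_nonneg (inv_nonneg.2 (hρpos z hz0).le)]
        rw [dist_eq_norm, sub_zero] at hz
        calc ‖(rho L z)⁻¹ • z‖ = (rho L z)⁻¹ * ‖z‖ := h2
          _ ≤ (r₀/2)⁻¹ * ‖z‖ := by
              apply mul_le_mul_of_nonneg_right h1 (norm_nonneg z)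
          _ < (r₀/2)⁻¹ * (r₀/2 * ε) := by
              apply mul_lt_mul_of_pos_left hz (inv_pos.2 (by linarith))
          _ = ε := by field_simp
    · exact ((hρcont y hy).inv₀ (hρpos y hy).ne').smul continuousAt_id
  · -- injectivity on L
    intro y1 hy1 y2 hy2 heq
    simp only at heq
    rcases eq_or_ne y1 0 with rfl | h1
    · rcases eq_or_ne y2 0 with rfl | h2
      · rfl
      · exfalso
        rw [smul_zero] at heq
        have := heq.symm
        rw [smul_eq_zero] at this
        rcases this with h | h
        · exact absurd h (inv_ne_zero (hρpos y2 h2).ne')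
        · exact h2 h
    · rcases eq_or_ne y2 0 with rfl | h2
      · exfalso
        rw [smul_zero] at heq
        rw [smul_eq_zero] at heq
        rcases heq with h | h
        · exact absurd h (inv_ne_zero (hρpos y1 h1).ne')
        · exact h1 h
      · -- both nonzero
        have hρ1 := hρpos y1 h1
        have hρ2 := hρpos y2 h2
        have hk : y1 = (rho L y1 * (rho L y2)⁻¹) • y2 := by
          have := congrArg (fun w => rho L y1 • w) heq
          simp only [smul_smul] at this
          rw [mul_inv_cancel₀ hρ1.ne', one_smul] at this
          exact this
        have hkpos : 0 < rho L y1 * (rho L y2)⁻¹ := by positivity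
        have hρeq : rho L y1 = rho L y2 := by
          calc rho L y1 = rho L ((rho L y1 * (rho L y2)⁻¹) • y2) := congrArg (rho L) hk
            _ = rho L y2 := hρinv y2 h2 _ hkpos
        rw [hρeq] at heq
        exact smul_right_injective E (inv_ne_zero hρ2.ne') heq
  · -- image equals closed unit ball
    apply Set.eq_of_subset_of_subset
    · rintro _ ⟨y, hyL, rfl⟩
      rcases eq_or_ne y 0 with rfl | hy
      · simp
      · have hy' : ‖y‖ • (‖y‖⁻¹ • y) = y := by
          rw [smul_smul, mul_inv_cancel₀ (norm_ne_zero_iff.2 hy), one_smul]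
        have hnorm_le : ‖y‖ ≤ rho L y := by
          apply hle_of_mem y hy ‖y‖ (norm_nonneg y)
          rw [hy']; exact hyL
        show ‖(rho L y)⁻¹ • y‖ ≤ 1
        rw [norm_smul, Real.norm_eq_abs, abs_of_nonneg (inv_nonneg.2 (hρpos y hy).le)]
        calc (rho L y)⁻¹ * ‖y‖ ≤ (rho L y)⁻¹ * rho L y :=
              mul_le_mul_of_nonneg_left hnorm_le (inv_nonneg.2 (hρpos y hy).le)
          _ = 1 := inv_mul_cancel₀ (hρpos y hy).ne'
    · intro u hu
      rcases eq_or_ne u 0 with rfl | hu0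
      · exact ⟨0, hL0, smul_zero _⟩
      · have hρu := hρpos u hu0
        have hnu : ‖u‖ ≠ 0 := norm_ne_zero_iff.2 hu0
        have hmem : rho L u • u ∈ L := by
          have heq2 : rho L u • u = (‖u‖ * rho L u) • (‖u‖⁻¹ • u) := by
            rw [smul_smul]
            match_scalars
            field_simp
          rw [heq2]
          apply hmem_of_le u hu0 _ (by positivity)
          have hu1 : ‖u‖ ≤ 1 := hu
          nlinarith
        refine ⟨rho L u • u, hmem, ?_⟩
        show (rho L (rho L u • u))⁻¹ • (rho L u • u) = u
        rw [hρinv u hu0 _ hρu, smul_smul, inv_mul_cancel₀ hρu.ne', one_smul]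

end PolyOnePoint
end StarPart
section MainLemma

variable {E : Type*} [NormedAddCommGroup E] [InnerProductSpace ℝ E] [FiniteDimensional ℝ E]

open PolyOnePoint
open scoped OnePoint

theorem main_onePoint_homeo (Q : Set E) (hQc : IsClosed Q) (hconv : Convex ℝ Q)
    (x₀ : E) (hx₀ : x₀ ∈ interior Q) (c : E)
    (hl : ∀ x ∈ Q, -(1/2 : ℝ) ≤ ⟪c, x - x₀⟫)
    (hbd : ∀ M : ℝ, IsBounded {x | x ∈ Q ∧ ⟪c, x - x₀⟫ ≤ M})
    (hCex : ∃ C : ℝ, 0 < C ∧ ∀ x ∈ Q, ‖x - x₀‖ ≤ C * (1 + ⟪c, x - x₀⟫))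
    (hunb : ¬ IsBounded Q) :
    Nonempty (OnePoint Q ≃ₜ {x : E | ‖x‖ ≤ 1}) := by
  classical
  obtain ⟨C, hCpos, hC⟩ := hCex
  have hlq : ∀ x ∈ Q, (0:ℝ) < 1 + ⟪c, x - x₀⟫ := fun x hx => by
    have := hl x hx; linarith
  have hx₀Q : x₀ ∈ Q := interior_subset hx₀
  -- the compact convex body K
  have hgb : ∀ x ∈ Q, ‖gm c x₀ x‖ ≤ C := by
    intro x hx
    rw [gm, norm_smul, Real.norm_eq_abs, abs_of_nonneg (inv_nonneg.2 (hlq x hx).le),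
      ← div_eq_inv_mul, div_le_iff₀ (hlq x hx)]
    exact hC x hx
  have hKbdd : IsBounded (gm c x₀ '' Q) := isBounded_iff_forall_norm_le.2
    ⟨C, by rintro _ ⟨x, hx, rfl⟩; exact hgb x hx⟩
  have hKcomp : IsCompact (closure (gm c x₀ '' Q)) :=
    Metric.isCompact_of_isClosed_isBounded isClosed_closure hKbdd.closure
  have himconv : Convex ℝ (gm c x₀ '' Q) := by
    rintro _ ⟨x1, hx1, rfl⟩ _ ⟨x2, hx2, rfl⟩ t1 t2 ht1 ht2 hsum
    obtain ⟨μ1, μ2, hμ1, hμ2, hμsum, heq⟩ := gm_combo (hlq x1 hx1) (hlq x2 hx2) ht1 ht2 hsum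
    exact ⟨μ1 • x1 + μ2 • x2, hconv hx1 hx2 hμ1 hμ2 hμsum, heq⟩
  have hKconv : Convex ℝ (closure (gm c x₀ '' Q)) := himconv.closure
  have hσlt : ∀ x ∈ Q, ⟪c, gm c x₀ x⟫ < 1 := fun x hx => inner_gm_lt_one (hlq x hx)
  have hσK : ∀ y ∈ closure (gm c x₀ '' Q), -1 ≤ ⟪c, y⟫ ∧ ⟪c, y⟫ ≤ 1 := by
    have hsub : gm c x₀ '' Q ⊆ {y : E | -1 ≤ ⟪c, y⟫ ∧ ⟪c, y⟫ ≤ 1} := by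
      rintro _ ⟨x, hx, rfl⟩
      refine ⟨?_, (hσlt x hx).le⟩
      rw [inner_gm]
      have h1 := hlq x hx
      have h2 := hl x hx
      have h3 : (1 + ⟪c, x - x₀⟫)⁻¹ ≤ 2 := by
        rw [show (2:ℝ) = (1/2 : ℝ)⁻¹ by norm_num]
        exact inv_anti₀ (by norm_num) (by linarith)
      have h4 : (1 + ⟪c, x - x₀⟫)⁻¹ * ⟪c, x - x₀⟫ = 1 - (1 + ⟪c, x - x₀⟫)⁻¹ := by
        field_simp
        ring
      rw [h4]; linarith
    have hcl : IsClosed {y : E | -1 ≤ ⟪c, y⟫ ∧ ⟪c, y⟫ ≤ 1} :=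
      (isClosed_le continuous_const continuous_inner_right).inter
        (isClosed_le continuous_inner_right continuous_const)
    exact fun y hy => closure_minimal hsub hcl hy
  -- identification of the image
  have hKint : closure (gm c x₀ '' Q) ∩ {y : E | ⟪c, y⟫ < 1} = gm c x₀ '' Q := by
    apply Set.Subset.antisymm
    · rintro y ⟨hyK, hylt⟩
      obtain ⟨yn, hyn, hlim⟩ := mem_closure_iff_seq_limit.1 hyK
      have hxQ : gm' c x₀ y ∈ Q := by
        have hcont : ContinuousAt (gm' c x₀) y := continuousAt_gm' hylt
        have htd : Tendsto (fun n => gm' c x₀ (yn n)) atTop (𝓝 (gm' c x₀ y)) :=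
          (hcont.tendsto).comp hlim
        apply hQc.mem_of_tendsto htd
        filter_upwards with n
        obtain ⟨x, hx, hgx⟩ := hyn n
        rw [← hgx, gm'_gm (hlq x hx)]
        exact hx
      exact ⟨gm' c x₀ y, hxQ, gm_gm' hylt⟩
    · rintro _ ⟨x, hx, rfl⟩
      exact ⟨subset_closure ⟨x, hx, rfl⟩, hσlt x hx⟩
  -- 0 is interior to K
  have hg0 : gm c x₀ x₀ = 0 := by simp [gm]
  have hσ0 : ⟪c, (0:E)⟫ = 0 := inner_zero_right c
  have hσopen : IsOpen {y : E | ⟪c, y⟫ < 1} := isOpen_lt continuous_inner_right continuous_const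
  have h0mem : (0:E) ∈ interior (closure (gm c x₀ '' Q)) := by
    refine mem_interior.2 ⟨{y : E | ⟪c, y⟫ < 1} ∩ gm' c x₀ ⁻¹' (interior Q), ?_, ?_, ?_, ?_⟩
    · rintro y ⟨hy1, hy2⟩
      have : y = gm c x₀ (gm' c x₀ y) := (gm_gm' hy1).symm
      rw [this]
      exact subset_closure ⟨gm' c x₀ y, interior_subset hy2, rfl⟩
    · exact ContinuousOn.isOpen_inter_preimage
        (fun y hy => (continuousAt_gm' hy).continuousWithinAt) hσopen isOpen_interior
    · show ⟪c, (0:E)⟫ < 1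
      rw [hσ0]; norm_num
    · show gm' c x₀ 0 ∈ interior Q
      simpa [gm'] using hx₀
  -- a point q at the face at infinity
  have hq_ex : ∃ q ∈ closure (gm c x₀ '' Q), ⟪c, q⟫ = 1 := by
    have hseq : ∀ n : ℕ, ∃ x, x ∈ Q ∧ (n:ℝ) < ‖x‖ := by
      intro n
      by_contra hcon
      push_neg at hcon
      exact hunb (isBounded_iff_forall_norm_le.2 ⟨n, fun x hx => hcon x hx⟩)
    choose xs hxsQ hxs using hseq
    have hltend : Tendsto (fun n => ⟪c, xs n - x₀⟫) atTop atTop := by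
      rw [Filter.tendsto_atTop]
      intro M
      obtain ⟨R, hR⟩ := isBounded_iff_forall_norm_le.1 (hbd M)
      rw [eventually_atTop]
      refine ⟨⌈R⌉₊ + 1, fun n hn => ?_⟩
      by_contra hcon
      push_neg at hcon
      have h1 : ‖xs n‖ ≤ R := hR _ ⟨hxsQ n, hcon.le⟩
      have h2 : (n:ℝ) < ‖xs n‖ := hxs n
      have h3 : R ≤ (⌈R⌉₊:ℝ) := Nat.le_ceil R
      have h4 : ((⌈R⌉₊ + 1 : ℕ):ℝ) ≤ (n:ℝ) := Nat.cast_le.2 hn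
      push_cast at h4
      linarith
    have hmemK : ∀ n, gm c x₀ (xs n) ∈ closure (gm c x₀ '' Q) := fun n =>
      subset_closure ⟨xs n, hxsQ n, rfl⟩
    obtain ⟨q, hqK, φ, hφ, hφlim⟩ := hKcomp.tendsto_subseq hmemK
    refine ⟨q, hqK, ?_⟩
    have h1 : Tendsto (fun k => ⟪c, gm c x₀ (xs (φ k))⟫) atTop (𝓝 ⟪c, q⟫) := by
      have := ((continuous_inner_right (c := c)).tendsto q).comp hφlim
      simpa [Function.comp_def] using this
    have h2 : Tendsto (fun k => ⟪c, gm c x₀ (xs (φ k))⟫) atTop (𝓝 1) := by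
      have heqk : ∀ k : ℕ, ⟪c, gm c x₀ (xs (φ k))⟫ = 1 - (1 + ⟪c, xs (φ k) - x₀⟫)⁻¹ := by
        intro k
        have := one_sub_inner_gm (c := c) (x₀ := x₀) (x := xs (φ k)) (hlq _ (hxsQ _)).ne'
        linarith
      simp_rw [heqk]
      have h3 : Tendsto (fun k : ℕ => 1 + ⟪c, xs (φ k) - x₀⟫) atTop atTop :=
        tendsto_atTop_add_const_left _ 1 (hltend.comp hφ.tendsto_atTop)
      simpa using tendsto_const_nhds.sub h3.inv_tendsto_atTop
    exact tendsto_nhds_unique h1 h2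
  obtain ⟨q, hqK, hq1⟩ := hq_ex
  -- the collapsed body L
  obtain ⟨L, hLdef⟩ : ∃ L : Set E, L = hm c q '' closure (gm c x₀ '' Q) := ⟨_, rfl⟩
  have hLcomp : IsCompact L := hLdef ▸ hKcomp.image continuous_hm
  have hm0 : hm c q 0 = 0 := by simp [hm, inner_zero_right]
  have hopen_im : ∀ U : Set E, IsOpen U → U ⊆ closure (gm c x₀ '' Q) →
      hm c q '' (U ∩ {y : E | ⟪c, y⟫ < 1}) ⊆ interior L := by
    intro U hU hUK
    have hset : hm c q '' (U ∩ {y : E | ⟪c, y⟫ < 1})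
        = {y : E | ⟪c, y⟫ < 1} ∩ hm' c q ⁻¹' (U ∩ {y : E | ⟪c, y⟫ < 1}) := by
      ext y
      constructor
      · rintro ⟨u, ⟨huU, hus⟩, rfl⟩
        have hσu : ⟪c, hm c q u⟫ = ⟪c, u⟫ := inner_hm hq1 u
        refine ⟨by rw [Set.mem_setOf_eq, hσu]; exact hus, ?_⟩
        rw [Set.mem_preimage, hm'_hm hq1 hus]
        exact ⟨huU, hus⟩
      · rintro ⟨hys, hymem⟩
        exact ⟨hm' c q y, hymem, hm_hm' hq1 hys⟩
    rw [hset]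
    apply interior_maximal
    · rintro y ⟨hys, hyU⟩
      rw [Set.mem_preimage] at hyU
      rw [hLdef]
      exact ⟨hm' c q y, hUK hyU.1, hm_hm' hq1 hys⟩
    · exact ContinuousOn.isOpen_inter_preimage
        (fun y hy => (continuousAt_hm' hy).continuousWithinAt) hσopen (hU.inter hσopen)
  have h0intL : (0:E) ∈ interior L := by
    apply hopen_im (interior (closure (gm c x₀ '' Q))) isOpen_interior interior_subset
    refine ⟨0, ⟨h0mem, ?_⟩, hm0⟩
    rw [Set.mem_setOf_eq, hσ0]; norm_num
  -- strict star-shapedness of L about 0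
  have hstar : ∀ p ∈ L, ∀ t : ℝ, 0 < t → t < 1 → t • p ∈ interior L := by
    intro p hp t ht0 ht1
    rw [hLdef] at hp
    obtain ⟨y, hyK, rfl⟩ := hp
    obtain ⟨hs1, hs2⟩ := hσK y hyK
    have hts : t * ⟪c, y⟫ < 1 := by nlinarith
    have hts' : (0:ℝ) < 1 - t * ⟪c, y⟫ := by linarith
    have hsq1 : ⟪c, y⟫ ^ 2 ≤ 1 := by nlinarith
    have hss : t * ⟪c, y⟫ ^ 2 < 1 := by nlinarith
    have hss0 : 0 ≤ t * ⟪c, y⟫ ^ 2 := by positivity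
    have hlam0 : 0 < (1 - t) / (1 - t * ⟪c, y⟫) := div_pos (by linarith) hts'
    have hlam1 : (1 - t) / (1 - t * ⟪c, y⟫) ≤ 1 := by
      rw [div_le_one hts']; nlinarith
    have hq_int : (t * ⟪c, y⟫ ^ 2) • q ∈ interior (closure (gm c x₀ '' Q)) := by
      have heq0 : (t * ⟪c, y⟫ ^ 2) • q
          = (1 - t * ⟪c, y⟫ ^ 2) • (0:E) + (t * ⟪c, y⟫ ^ 2) • q := by simp
      rw [heq0]
      exact hKconv.combo_interior_closure_mem_interior h0mem
        (by rw [closure_closure]; exact hqK) (by linarith) hss0 (by ring)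
    have hPint : ((1 - t) / (1 - t * ⟪c, y⟫)) • ((t * ⟪c, y⟫ ^ 2) • q)
        + (1 - (1 - t) / (1 - t * ⟪c, y⟫)) • y ∈ interior (closure (gm c x₀ '' Q)) :=
      hKconv.combo_interior_closure_mem_interior hq_int
        (by rw [closure_closure]; exact hyK) hlam0 (by linarith) (by ring)
    have hPσ : ⟪c, ((1 - t) / (1 - t * ⟪c, y⟫)) • ((t * ⟪c, y⟫ ^ 2) • q)
        + (1 - (1 - t) / (1 - t * ⟪c, y⟫)) • y⟫ = t * ⟪c, y⟫ :=
      inner_combo hq1 rfl hts'.ne' rfl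
    have hcombo := hm_combo (c := c) (q := q) hq1 (y := y) (t := t) rfl hts'.ne' rfl
    rw [← hcombo]
    apply hopen_im (interior (closure (gm c x₀ '' Q))) isOpen_interior interior_subset
    exact ⟨_, ⟨hPint, by rw [Set.mem_setOf_eq, hPσ]; exact hts⟩, rfl⟩
  -- the radial homeomorphism data
  obtain ⟨Ψ, hΨcont, hΨinj, hΨim⟩ := star_embed L hLcomp h0intL hstar
  have hmapL : ∀ x ∈ Q, hm c q (gm c x₀ x) ∈ L := fun x hx => by
    rw [hLdef]; exact ⟨gm c x₀ x, subset_closure ⟨x, hx, rfl⟩, rfl⟩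
  have hqL : q ∈ L := by rw [hLdef]; exact ⟨q, hqK, hm_of_inner_one hq1⟩
  have hmem_ball : ∀ y ∈ L, Ψ y ∈ {x : E | ‖x‖ ≤ 1} := fun y hy => by
    rw [← hΨim]; exact Set.mem_image_of_mem Ψ hy
  have hσgm : ∀ x : Q, ⟪c, gm c x₀ (↑x : E)⟫ < 1 := fun x => hσlt (↑x) x.2
  -- the function on the one-point compactification
  obtain ⟨F, hFdef⟩ : ∃ (F : OnePoint Q → ↥{x : E | ‖x‖ ≤ 1}),
      F = fun o => OnePoint.rec (⟨Ψ q, hmem_ball q hqL⟩ : {x : E | ‖x‖ ≤ 1})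
        (fun x => ⟨Ψ (hm c q (gm c x₀ (↑x : E))), hmem_ball _ (hmapL (↑x) x.2)⟩) o := ⟨_, rfl⟩
  have hFinfty : F ∞ = ⟨Ψ q, hmem_ball q hqL⟩ := by rw [hFdef]; rfl
  have hFcoe : ∀ x : Q, F ↑x
      = ⟨Ψ (hm c q (gm c x₀ (↑x : E))), hmem_ball _ (hmapL (↑x) x.2)⟩ := fun x => by
    rw [hFdef]; rfl
  -- tendsto at infinity
  have hT1 : Tendsto (fun x : Q => hm c q (gm c x₀ (↑x : E))) (coclosedCompact Q) (𝓝 q) := by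
    rw [(hasBasis_coclosedCompact).tendsto_iff Metric.nhds_basis_ball]
    intro ε hε
    refine ⟨{x : Q | ⟪c, (↑x : E) - x₀⟫ ≤ (C + 2 * ‖q‖) / ε}, ⟨?_, ?_⟩, ?_⟩
    · exact isClosed_le (continuous_const.inner (continuous_subtype_val.sub continuous_const))
        continuous_const
    · rw [Subtype.isCompact_iff]
      have heqs : Subtype.val '' {x : Q | ⟪c, (↑x : E) - x₀⟫ ≤ (C + 2 * ‖q‖) / ε}
          = {x | x ∈ Q ∧ ⟪c, x - x₀⟫ ≤ (C + 2 * ‖q‖) / ε} := by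
        ext x
        constructor
        · rintro ⟨⟨x', hx'⟩, hxs, rfl⟩
          exact ⟨hx', hxs⟩
        · rintro ⟨hxQ, hxs⟩
          exact ⟨⟨x, hxQ⟩, hxs, rfl⟩
      rw [heqs]
      apply Metric.isCompact_of_isClosed_isBounded
      · have : {x | x ∈ Q ∧ ⟪c, x - x₀⟫ ≤ (C + 2 * ‖q‖) / ε}
            = Q ∩ {x : E | ⟪c, x - x₀⟫ ≤ (C + 2 * ‖q‖) / ε} := rfl
        rw [this]
        exact hQc.inter (isClosed_le
          (continuous_const.inner (continuous_id.sub continuous_const)) continuous_const)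
      · exact hbd _
    · intro x hx
      rw [Set.mem_compl_iff, Set.mem_setOf_eq, not_le] at hx
      rw [mem_ball_iff_norm]
      have hsy := hσK _ (subset_closure ⟨(↑x : E), x.2, rfl⟩)
      rw [hm_sub_q hq1 (gm c x₀ (↑x : E)), norm_smul, Real.norm_eq_abs]
      have hpos1 : (0:ℝ) < 1 + ⟪c, (↑x : E) - x₀⟫ := hlq (↑x) x.2
      have h1s : 1 - ⟪c, gm c x₀ (↑x : E)⟫ = (1 + ⟪c, (↑x : E) - x₀⟫)⁻¹ :=
        one_sub_inner_gm hpos1.ne'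
      have habs : |1 - ⟪c, gm c x₀ (↑x : E)⟫| = (1 + ⟪c, (↑x : E) - x₀⟫)⁻¹ := by
        rw [h1s, abs_of_pos (inv_pos.2 hpos1)]
      rw [habs]
      have hna : ‖gm c x₀ (↑x : E) - ⟪c, gm c x₀ (↑x : E)⟫ • q - q‖ ≤ C + 2 * ‖q‖ := by
        have t1 : ‖gm c x₀ (↑x : E)‖ ≤ C := hgb (↑x) x.2
        have t2 : ‖⟪c, gm c x₀ (↑x : E)⟫ • q‖ ≤ ‖q‖ := by
          rw [norm_smul, Real.norm_eq_abs]
          have habs1 : |⟪c, gm c x₀ (↑x : E)⟫| ≤ 1 := abs_le.2 ⟨hsy.1, hsy.2⟩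
          nlinarith [norm_nonneg q]
        calc ‖gm c x₀ (↑x : E) - ⟪c, gm c x₀ (↑x : E)⟫ • q - q‖
            ≤ ‖gm c x₀ (↑x : E) - ⟪c, gm c x₀ (↑x : E)⟫ • q‖ + ‖q‖ := norm_sub_le _ _
          _ ≤ ‖gm c x₀ (↑x : E)‖ + ‖⟪c, gm c x₀ (↑x : E)⟫ • q‖ + ‖q‖ := by
              linarith [norm_sub_le (gm c x₀ (↑x : E)) (⟪c, gm c x₀ (↑x : E)⟫ • q)]
          _ ≤ C + 2 * ‖q‖ := by linarith
      have hCq : (0:ℝ) < C + 2 * ‖q‖ := by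
        have := norm_nonneg q; linarith
      have hεl : C + 2 * ‖q‖ < ε * (1 + ⟪c, (↑x : E) - x₀⟫) := by
        have hd := (div_lt_iff₀ hε).1 hx
        nlinarith
      calc (1 + ⟪c, (↑x : E) - x₀⟫)⁻¹ * ‖gm c x₀ (↑x : E) - ⟪c, gm c x₀ (↑x : E)⟫ • q - q‖
          ≤ (1 + ⟪c, (↑x : E) - x₀⟫)⁻¹ * (C + 2 * ‖q‖) :=
            mul_le_mul_of_nonneg_left hna (inv_pos.2 hpos1).le
        _ < ε := by
            rw [← div_eq_inv_mul, div_lt_iff₀ hpos1]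
            linarith
  have hFcont : Continuous F := by
    rw [hFdef, OnePoint.continuous_iff]
    constructor
    · apply tendsto_subtype_rng.2
      exact (hΨcont q hqL).tendsto.comp hT1
    · apply Continuous.subtype_mk
      rw [continuous_iff_continuousAt]
      intro x
      have h1 : ContinuousAt (fun x : Q => gm c x₀ (↑x : E)) x :=
        (continuousAt_gm (hlq (↑x) x.2).ne').comp continuous_subtype_val.continuousAt
      have h2 : ContinuousAt (fun x : Q => hm c q (gm c x₀ (↑x : E))) x :=
        continuous_hm.continuousAt.comp h1
      exact Filter.Tendsto.comp (hΨcont _ (hmapL (↑x) x.2)) h2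
  -- bijectivity
  have hFbij : Function.Bijective F := by
    constructor
    · intro o1 o2 heq
      induction o1 using OnePoint.rec with
      | infty =>
        induction o2 using OnePoint.rec with
        | infty => rfl
        | coe x =>
          exfalso
          rw [hFinfty, hFcoe x] at heq
          have hqe : q = hm c q (gm c x₀ (↑x : E)) :=
            hΨinj hqL (hmapL (↑x) x.2) (congrArg Subtype.val heq)
          have hcontra : (1:ℝ) < 1 := by
            calc (1:ℝ) = ⟪c, q⟫ := hq1.symm
              _ = ⟪c, hm c q (gm c x₀ (↑x : E))⟫ := by rw [← hqe]
              _ = ⟪c, gm c x₀ (↑x : E)⟫ := inner_hm hq1 _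
              _ < 1 := hσgm x
          exact lt_irrefl 1 hcontra
      | coe x =>
        induction o2 using OnePoint.rec with
        | infty =>
          exfalso
          rw [hFinfty, hFcoe x] at heq
          have hqe : hm c q (gm c x₀ (↑x : E)) = q :=
            hΨinj (hmapL (↑x) x.2) hqL (congrArg Subtype.val heq)
          have hcontra : (1:ℝ) < 1 := by
            calc (1:ℝ) = ⟪c, q⟫ := hq1.symm
              _ = ⟪c, hm c q (gm c x₀ (↑x : E))⟫ := by rw [hqe]
              _ = ⟪c, gm c x₀ (↑x : E)⟫ := inner_hm hq1 _
              _ < 1 := hσgm x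
          exact lt_irrefl 1 hcontra
        | coe x2 =>
          rw [hFcoe x, hFcoe x2] at heq
          have h1 : hm c q (gm c x₀ (↑x : E)) = hm c q (gm c x₀ (↑x2 : E)) :=
            hΨinj (hmapL (↑x) x.2) (hmapL (↑x2) x2.2) (congrArg Subtype.val heq)
          have h2 : gm c x₀ (↑x : E) = gm c x₀ (↑x2 : E) := by
            have e1 := hm'_hm hq1 (hσgm x)
            have e2 := hm'_hm hq1 (hσgm x2)
            rw [← e1, ← e2, h1]
          have h3 : (↑x : E) = (↑x2 : E) := by
            have e1 := gm'_gm (c := c) (hlq (↑x) x.2)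
            have e2 := gm'_gm (c := c) (hlq (↑x2) x2.2)
            rw [← e1, ← e2, h2]
          exact congrArg (fun z : Q => (z : OnePoint Q)) (Subtype.ext h3)
    · rintro ⟨u, hu⟩
      have hu' : u ∈ Ψ '' L := by rw [hΨim]; exact hu
      obtain ⟨y, hyL, hyu⟩ := hu'
      rw [hLdef] at hyL
      obtain ⟨k, hkK, rfl⟩ := hyL
      rcases lt_or_eq_of_le (hσK k hkK).2 with hklt | hk1
      · have hkQ : k ∈ gm c x₀ '' Q := by rw [← hKint]; exact ⟨hkK, hklt⟩
        obtain ⟨x, hxQ, rfl⟩ := hkQ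
        refine ⟨((⟨x, hxQ⟩ : Q) : OnePoint Q), ?_⟩
        rw [hFcoe ⟨x, hxQ⟩]
        exact Subtype.ext hyu
      · refine ⟨∞, ?_⟩
        rw [hFinfty]
        apply Subtype.ext
        show Ψ q = u
        rw [← hyu, hm_of_inner_one hk1]
  exact ⟨Continuous.homeoOfEquivCompactToT2 (f := Equiv.ofBijective F hFbij) hFcont⟩

end MainLemma

section Engine

variable {E : Type*} [NormedAddCommGroup E] [InnerProductSpace ℝ E] [FiniteDimensional ℝ E]

open PolyOnePoint

/-- sequences escaping to infinity with asymptotically nonpositive `c₀`-component contradict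
pointedness of the recession cone -/
lemma no_escape {n : ℕ} (a : Fin n → E) (b : Fin n → ℝ) (c₀ : E)
    (hker : ∀ v : E, v ≠ 0 → (∀ i, ⟪a i, v⟫ ≤ 0) → 0 < ⟪c₀, v⟫)
    (x₀ : E) (x : ℕ → E) (hxQ : ∀ k, ∀ i, ⟪a i, x k⟫ ≤ b i)
    (hnorm : ∀ k : ℕ, (k + 1 : ℝ) ≤ ‖x k - x₀‖)
    (ε : ℕ → ℝ) (hε : Tendsto ε atTop (𝓝 0))
    (hce : ∀ k, ⟪c₀, x k - x₀⟫ ≤ ε k * ‖x k - x₀‖) : False := by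
  have hpos : ∀ k : ℕ, (0:ℝ) < ‖x k - x₀‖ := fun k => lt_of_lt_of_le (by positivity) (hnorm k)
  have hne : ∀ k, x k - x₀ ≠ 0 := fun k => by
    intro h
    have := hpos k
    rw [h, norm_zero] at this
    exact lt_irrefl 0 this
  have huS : ∀ k, ‖x k - x₀‖⁻¹ • (x k - x₀) ∈ sphere (0:E) 1 := fun k => by
    rw [mem_sphere_zero_iff_norm]
    exact norm_smul_inv_norm (hne k)
  obtain ⟨v, hvS, φ, hφ, hφlim⟩ := (isCompact_sphere (0:E) 1).tendsto_subseq huS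
  have hvnorm : ‖v‖ = 1 := mem_sphere_zero_iff_norm.1 hvS
  have hvne : v ≠ 0 := by
    intro h
    rw [h, norm_zero] at hvnorm
    norm_num at hvnorm
  have hφatTop : Tendsto φ atTop atTop := hφ.tendsto_atTop
  have hφc : Tendsto (fun k : ℕ => ((φ k : ℝ) + 1)⁻¹) atTop (𝓝 0) := by
    apply Tendsto.inv_tendsto_atTop
    exact tendsto_atTop_add_const_right _ 1 (tendsto_natCast_atTop_atTop.comp hφatTop)
  have hinner_le : ∀ i, ⟪a i, v⟫ ≤ 0 := by
    intro i
    have hcont : Tendsto (fun k => ⟪a i, ‖x (φ k) - x₀‖⁻¹ • (x (φ k) - x₀)⟫) atTop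
        (𝓝 ⟪a i, v⟫) := by
      have := ((continuous_inner_right (c := a i)).tendsto v).comp hφlim
      simpa [Function.comp_def] using this
    have hgl : Tendsto (fun k : ℕ => max (b i - ⟪a i, x₀⟫) 0 * ((φ k : ℝ) + 1)⁻¹) atTop
        (𝓝 0) := by simpa using hφc.const_mul (max (b i - ⟪a i, x₀⟫) 0)
    refine le_of_tendsto_of_tendsto' hcont hgl fun k => ?_
    have h1 : ⟪a i, x (φ k) - x₀⟫ ≤ max (b i - ⟪a i, x₀⟫) 0 := by
      rw [inner_sub_right]
      have := hxQ (φ k) i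
      have h2 : b i - ⟪a i, x₀⟫ ≤ max (b i - ⟪a i, x₀⟫) 0 := le_max_left _ _
      linarith
    rw [real_inner_smul_right]
    calc ‖x (φ k) - x₀‖⁻¹ * ⟪a i, x (φ k) - x₀⟫
        ≤ ‖x (φ k) - x₀‖⁻¹ * max (b i - ⟪a i, x₀⟫) 0 :=
          mul_le_mul_of_nonneg_left h1 (inv_pos.2 (hpos (φ k))).le
      _ ≤ ((φ k : ℝ) + 1)⁻¹ * max (b i - ⟪a i, x₀⟫) 0 := by
          apply mul_le_mul_of_nonneg_right _ (le_max_right _ _)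
          exact inv_anti₀ (by positivity) (hnorm (φ k))
      _ = max (b i - ⟪a i, x₀⟫) 0 * ((φ k : ℝ) + 1)⁻¹ := mul_comm _ _
  have hc_le : ⟪c₀, v⟫ ≤ 0 := by
    have hcont : Tendsto (fun k => ⟪c₀, ‖x (φ k) - x₀‖⁻¹ • (x (φ k) - x₀)⟫) atTop
        (𝓝 ⟪c₀, v⟫) := by
      have := ((continuous_inner_right (c := c₀)).tendsto v).comp hφlim
      simpa [Function.comp_def] using this
    have hεφ : Tendsto (fun k => ε (φ k)) atTop (𝓝 0) := hε.comp hφatTop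
    refine le_of_tendsto_of_tendsto' hcont hεφ fun k => ?_
    rw [real_inner_smul_right]
    calc ‖x (φ k) - x₀‖⁻¹ * ⟪c₀, x (φ k) - x₀⟫
        ≤ ‖x (φ k) - x₀‖⁻¹ * (ε (φ k) * ‖x (φ k) - x₀‖) :=
          mul_le_mul_of_nonneg_left (hce (φ k)) (inv_pos.2 (hpos (φ k))).le
      _ = ε (φ k) := by
          rw [mul_comm (ε (φ k)), ← mul_assoc, inv_mul_cancel₀ (hpos (φ k)).ne', one_mul]
  exact absurd (hker v hvne hinner_le) (not_lt.2 hc_le)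

lemma sublevel_bounded {n : ℕ} (a : Fin n → E) (b : Fin n → ℝ) (c₀ : E)
    (hker : ∀ v : E, v ≠ 0 → (∀ i, ⟪a i, v⟫ ≤ 0) → 0 < ⟪c₀, v⟫) (x₀ : E) (M : ℝ) :
    IsBounded {x : E | (∀ i, ⟪a i, x⟫ ≤ b i) ∧ ⟪c₀, x - x₀⟫ ≤ M} := by
  by_contra hcon
  rw [isBounded_iff_forall_norm_le] at hcon
  push_neg at hcon
  have hsel : ∀ k : ℕ, ∃ x, ((∀ i, ⟪a i, x⟫ ≤ b i) ∧ ⟪c₀, x - x₀⟫ ≤ M)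
      ∧ ‖x₀‖ + (k + 1) < ‖x‖ := by
    intro k
    obtain ⟨x, hx1, hx2⟩ := hcon (‖x₀‖ + (k + 1))
    exact ⟨x, hx1, hx2⟩
  choose xs hxs hxsn using hsel
  have hnorm : ∀ k : ℕ, (k + 1 : ℝ) ≤ ‖xs k - x₀‖ := by
    intro k
    have h1 := hxsn k
    have h2 : ‖xs k‖ - ‖x₀‖ ≤ ‖xs k - x₀‖ := norm_sub_norm_le _ _
    linarith
  have htend : Tendsto (fun k : ℕ => max M 0 * ((k : ℝ) + 1)⁻¹) atTop (𝓝 0) := by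
    have : Tendsto (fun k : ℕ => ((k : ℝ) + 1)⁻¹) atTop (𝓝 0) :=
      Tendsto.inv_tendsto_atTop (tendsto_atTop_add_const_right _ 1 tendsto_natCast_atTop_atTop)
    simpa using this.const_mul (max M 0)
  refine no_escape a b c₀ hker x₀ xs (fun k => (hxs k).1) hnorm _ htend fun k => ?_
  have h1 : ⟪c₀, xs k - x₀⟫ ≤ max M 0 := le_trans (hxs k).2 (le_max_left _ _)
  have h2 : max M 0 ≤ max M 0 * (((k:ℝ) + 1)⁻¹ * ‖xs k - x₀‖) := by
    have h3 : (1:ℝ) ≤ ((k:ℝ) + 1)⁻¹ * ‖xs k - x₀‖ := by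
      rw [← div_eq_inv_mul, le_div_iff₀ (by positivity : (0:ℝ) < (k:ℝ)+1)]
      simpa using hnorm k
    nlinarith [le_max_right M 0]
  calc ⟪c₀, xs k - x₀⟫ ≤ max M 0 := h1
    _ ≤ max M 0 * (((k:ℝ) + 1)⁻¹ * ‖xs k - x₀‖) := h2
    _ = max M 0 * ((k:ℝ) + 1)⁻¹ * ‖xs k - x₀‖ := by ring

lemma growth_bound {n : ℕ} (a : Fin n → E) (b : Fin n → ℝ) (c₀ : E)
    (hker : ∀ v : E, v ≠ 0 → (∀ i, ⟪a i, v⟫ ≤ 0) → 0 < ⟪c₀, v⟫) (x₀ : E) (M₀ : ℝ)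
    (hM₀ : 0 ≤ M₀) (hlb : ∀ x, (∀ i, ⟪a i, x⟫ ≤ b i) → -M₀ ≤ ⟪c₀, x - x₀⟫) :
    ∃ C₀ : ℝ, 0 < C₀ ∧ ∀ x, (∀ i, ⟪a i, x⟫ ≤ b i) →
      ‖x - x₀‖ ≤ C₀ * (1 + M₀ + ⟪c₀, x - x₀⟫) := by
  by_contra hcon
  push_neg at hcon
  have hsel : ∀ k : ℕ, ∃ x, (∀ i, ⟪a i, x⟫ ≤ b i)
      ∧ ((k:ℝ) + 1) * (1 + M₀ + ⟪c₀, x - x₀⟫) < ‖x - x₀‖ := by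
    intro k
    obtain ⟨x, hx1, hx2⟩ := hcon ((k:ℝ) + 1) (by positivity)
    exact ⟨x, hx1, hx2⟩
  choose xs hxs hxsn using hsel
  have hfac : ∀ k : ℕ, (1:ℝ) ≤ 1 + M₀ + ⟪c₀, xs k - x₀⟫ := by
    intro k
    have := hlb (xs k) (hxs k)
    linarith
  have hnorm : ∀ k : ℕ, (k + 1 : ℝ) ≤ ‖xs k - x₀‖ := by
    intro k
    have h1 := hxsn k
    have h2 := hfac k
    nlinarith [h1, h2]
  have htend : Tendsto (fun k : ℕ => ((k : ℝ) + 1)⁻¹) atTop (𝓝 0) :=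
    Tendsto.inv_tendsto_atTop (tendsto_atTop_add_const_right _ 1 tendsto_natCast_atTop_atTop)
  refine no_escape a b c₀ hker x₀ xs hxs hnorm _ htend fun k => ?_
  have h1 := hxsn k
  have h2 := hfac k
  have hkpos : (0:ℝ) < (k:ℝ) + 1 := by positivity
  have h4 : ⟪c₀, xs k - x₀⟫ ≤ ‖xs k - x₀‖ / ((k:ℝ)+1) := by
    rw [le_div_iff₀ hkpos]
    nlinarith [hM₀]
  calc ⟪c₀, xs k - x₀⟫ ≤ ‖xs k - x₀‖ / ((k:ℝ)+1) := h4
    _ = ((k:ℝ)+1)⁻¹ * ‖xs k - x₀‖ := div_eq_inv_mul _ _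

end Engine
section Glue

variable {E : Type*} [NormedAddCommGroup E] [InnerProductSpace ℝ E] [FiniteDimensional ℝ E]

theorem poly_onePoint_homeo (Q : Set E) {n : ℕ} (a : Fin n → E) (b : Fin n → ℝ)
    (hQeq : Q = {x : E | ∀ i, ⟪a i, x⟫ ≤ b i})
    (hne : Q.Nonempty)
    (hint : (interior Q).Nonempty)
    (hunb : ¬ Bornology.IsBounded Q)
    (hpointed : ¬ ∃ (x v : E), v ≠ 0 ∧ ∀ t : ℝ, x + t • v ∈ Q) :
    Nonempty (OnePoint ↥Q ≃ₜ ↥{x : E | ‖x‖ ≤ 1}) := by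
  classical
  have hQmem : ∀ x : E, x ∈ Q ↔ ∀ i, ⟪a i, x⟫ ≤ b i := fun x => by rw [hQeq]; exact Iff.rfl
  -- Q is closed and convex
  have hQc : IsClosed Q := by
    have heq2 : Q = ⋂ i, {x : E | ⟪a i, x⟫ ≤ b i} := by
      rw [hQeq]; ext x; simp [Set.mem_iInter]
    rw [heq2]
    exact isClosed_iInter fun i =>
      isClosed_le (continuous_const.inner continuous_id) continuous_const
  have hconv : Convex ℝ Q := by
    have heq2 : Q = ⋂ i, {x : E | ⟪a i, x⟫ ≤ b i} := by
      rw [hQeq]; ext x; simp [Set.mem_iInter]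
    rw [heq2]
    exact convex_iInter fun i => convex_halfSpace_le
      ⟨fun x y => inner_add_right _ _ _, fun r x => real_inner_smul_right _ _ _⟩ (b i)
  -- the dual vector
  obtain ⟨x₀, hx₀⟩ := hint
  obtain ⟨xw, hxw⟩ := hne
  have hker : ∀ v : E, v ≠ 0 → (∀ i, ⟪a i, v⟫ ≤ 0) → 0 < ⟪-(∑ i, a i), v⟫ := by
    intro v hv hle
    by_contra hc
    push_neg at hc
    have hsumv : ⟪-(∑ i, a i), v⟫ = -∑ i, ⟪a i, v⟫ := by
      rw [inner_neg_left, sum_inner]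
    have hsum : 0 ≤ ∑ i, ⟪a i, v⟫ := by rw [hsumv] at hc; linarith
    have hs0 : ∑ i ∈ Finset.univ, ⟪a i, v⟫ = 0 :=
      le_antisymm (Finset.sum_nonpos fun i _ => hle i) hsum
    have hzero : ∀ i, ⟪a i, v⟫ = 0 := fun i =>
      (Finset.sum_eq_zero_iff_of_nonpos fun i _ => hle i).1 hs0 i (Finset.mem_univ i)
    apply hpointed
    refine ⟨xw, v, hv, fun t => ?_⟩
    rw [hQmem]
    intro i
    rw [inner_add_right, real_inner_smul_right, hzero i, mul_zero, add_zero]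
    exact (hQmem xw).1 hxw i
  -- lower bound on the linear functional
  have hbd0 := sublevel_bounded a b (-(∑ i, a i)) hker x₀ 0
  obtain ⟨R, hR⟩ := isBounded_iff_forall_norm_le.1 hbd0
  obtain ⟨M₀, hM₀pos, hlb⟩ : ∃ M₀ : ℝ, 0 ≤ M₀ ∧
      ∀ x, (∀ i, ⟪a i, x⟫ ≤ b i) → -M₀ ≤ ⟪-(∑ i, a i), x - x₀⟫ := by
    refine ⟨‖(-(∑ i, a i) : E)‖ * (max R 0 + ‖x₀‖) + 1, by positivity, fun x hx => ?_⟩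
    rcases le_or_gt ⟪-(∑ i, a i), x - x₀⟫ 0 with h | h
    · have hxS : x ∈ {x : E | (∀ i, ⟪a i, x⟫ ≤ b i) ∧ ⟪-(∑ i, a i), x - x₀⟫ ≤ 0} := ⟨hx, h⟩
      have hxn : ‖x‖ ≤ R := hR x hxS
      have habs : |⟪-(∑ i, a i), x - x₀⟫| ≤ ‖(-(∑ i, a i) : E)‖ * ‖x - x₀‖ :=
        abs_real_inner_le_norm _ _
      have hxx : ‖x - x₀‖ ≤ max R 0 + ‖x₀‖ := by
        have := norm_sub_le x x₀
        have : ‖x‖ ≤ max R 0 := le_trans hxn (le_max_left _ _)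
        calc ‖x - x₀‖ ≤ ‖x‖ + ‖x₀‖ := norm_sub_le _ _
          _ ≤ max R 0 + ‖x₀‖ := by linarith
      have h2 : ‖(-(∑ i, a i) : E)‖ * ‖x - x₀‖
          ≤ ‖(-(∑ i, a i) : E)‖ * (max R 0 + ‖x₀‖) :=
        mul_le_mul_of_nonneg_left hxx (norm_nonneg _)
      have h3 := abs_le.1 habs
      linarith [h3.1]
    · have h4 : (0:ℝ) ≤ ‖(-(∑ i, a i) : E)‖ * (max R 0 + ‖x₀‖) := by positivity
      linarith
  -- growth bound
  obtain ⟨C₀, hC₀pos, hgrow⟩ := growth_bound a b (-(∑ i, a i)) hker x₀ M₀ hM₀pos hlb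
  -- rescale
  have hαpos : (0:ℝ) < (2 * (M₀ + 1))⁻¹ := by positivity
  refine main_onePoint_homeo Q hQc hconv x₀ hx₀ ((2 * (M₀ + 1))⁻¹ • (-(∑ i, a i))) ?_ ?_ ?_ hunb
  · -- hl
    intro x hx
    rw [real_inner_smul_left]
    have h1 := hlb x ((hQmem x).1 hx)
    have h2 : (2 * (M₀ + 1))⁻¹ * ⟪-(∑ i, a i), x - x₀⟫ ≥ (2 * (M₀ + 1))⁻¹ * (-M₀) :=
      mul_le_mul_of_nonneg_left h1 hαpos.le
    have h3 : (2 * (M₀ + 1))⁻¹ * (-M₀) ≥ -(1/2) := by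
      rw [ge_iff_le, neg_le, ← mul_neg, neg_neg]
      rw [inv_mul_le_iff₀ (by positivity : (0:ℝ) < 2 * (M₀ + 1))]
      nlinarith
    linarith
  · -- hbd
    intro M
    apply (sublevel_bounded a b (-(∑ i, a i)) hker x₀ (M * (2 * (M₀ + 1)))).subset
    rintro x ⟨hxQ, hxM⟩
    refine ⟨(hQmem x).1 hxQ, ?_⟩
    rw [real_inner_smul_left] at hxM
    have hmul := mul_le_mul_of_nonneg_left hxM
      (by positivity : (0:ℝ) ≤ 2 * (M₀ + 1))
    rw [← mul_assoc, mul_inv_cancel₀ (by positivity : (2 * (M₀ + 1) : ℝ) ≠ 0), one_mul] at hmul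
    linarith
  · -- hC
    refine ⟨C₀ * (2 * (M₀ + 1) ^ 2), by positivity, fun x hx => ?_⟩
    have h1 := hgrow x ((hQmem x).1 hx)
    have h2 := hlb x ((hQmem x).1 hx)
    rw [real_inner_smul_left]
    have h3 : C₀ * (1 + M₀ + ⟪-(∑ i, a i), x - x₀⟫)
        ≤ C₀ * (2 * (M₀ + 1) ^ 2) * (1 + (2 * (M₀ + 1))⁻¹ * ⟪-(∑ i, a i), x - x₀⟫) := by
      have hkey : (1 + M₀ + ⟪-(∑ i, a i), x - x₀⟫)
          ≤ (2 * (M₀ + 1) ^ 2) * (1 + (2 * (M₀ + 1))⁻¹ * ⟪-(∑ i, a i), x - x₀⟫) := by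
        have hexp : (2 * (M₀ + 1) ^ 2) * ((2 * (M₀ + 1))⁻¹ * ⟪-(∑ i, a i), x - x₀⟫)
            = (M₀ + 1) * ⟪-(∑ i, a i), x - x₀⟫ := by
          field_simp
        rw [mul_add, hexp, mul_one]
        nlinarith [h2, hM₀pos]
      calc C₀ * (1 + M₀ + ⟪-(∑ i, a i), x - x₀⟫)
          ≤ C₀ * ((2 * (M₀ + 1) ^ 2) * (1 + (2 * (M₀ + 1))⁻¹ * ⟪-(∑ i, a i), x - x₀⟫)) :=
            mul_le_mul_of_nonneg_left hkey hC₀pos.le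
        _ = C₀ * (2 * (M₀ + 1) ^ 2) * (1 + (2 * (M₀ + 1))⁻¹ * ⟪-(∑ i, a i), x - x₀⟫) := by
            ring
    linarith

end Glue

/-- The one-point compactification of an unbounded pointed polyhedron with
nonempty interior in ℝ^m is homeomorphic to the closed unit ball. -/
theorem onePoint_of_pointed_unbounded_polyhedron_homeomorph_closedBall
    (m : ℕ) (hm : 1 ≤ m)
    (Q : Set (EuclideanSpace ℝ (Fin m)))
    (hpoly : ∃ (n : ℕ) (a : Fin n → EuclideanSpace ℝ (Fin m)) (b : Fin n → ℝ),
      Q = {x | ∀ i, inner ℝ (a i) x ≤ b i})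
    (hne : Q.Nonempty)
    (hint : (interior Q).Nonempty)
    (hunb : ¬ Bornology.IsBounded Q)
    (hpointed : ¬ ∃ (x v : EuclideanSpace ℝ (Fin m)),
      v ≠ 0 ∧ ∀ t : ℝ, x + t • v ∈ Q) :
    Nonempty (OnePoint ↥Q ≃ₜ ↥{x : EuclideanSpace ℝ (Fin m) | ‖x‖ ≤ 1}) := by
  obtain ⟨n, a, b, hQeq⟩ := hpoly
  exact poly_onePoint_homeo Q a b hQeq hne hint hunb hpointed
end PolyOnePoint
end

section
/- Let d ≥ 1 and δ ∈ ℝ, let A ⊆ {u ∈ ℝ^d : u_1 + ⋯ + u_d = δ} be a finite set that affinely spans the hyperplane {u : u_1 + ⋯ + u_d = δ}, and let ω : A → ℝ. Consider the dome D = {(x,s) ∈ ℝ^d × ℝ : s ≤ ω(u) + ⟨u,x⟩ for all u ∈ A}. Then the lineality space of D, namely {v ∈ ℝ^d × ℝ : ∀ p ∈ D, ∀ t ∈ ℝ, p + t•v ∈ D}, equals the line ℝ • (𝟙, δ), where 𝟙 = (1,…,1) ∈ ℝ^d. -/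
lemma aux_eq_zero {a b : ℝ} (h : ∀ t : ℝ, t * a ≤ b) : a = 0 := by
  by_contra ha
  have h2 := h ((b + 1) / a)
  rw [div_mul_cancel₀ _ ha] at h2
  linarith

/-- For a point configuration affinely spanning the hyperplane of coordinate
sum δ, the lineality space of the dome is the line spanned by (𝟙, δ). -/
theorem lineality_space_of_dome_homogeneous
    (d : ℕ) (hd : 1 ≤ d) (δ : ℝ)
    (A : Set (EuclideanSpace ℝ (Fin d))) (hAfin : A.Finite)
    (hAsub : A ⊆ {u : EuclideanSpace ℝ (Fin d) | ∑ i, u i = δ})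
    (hspan : (affineSpan ℝ A : Set (EuclideanSpace ℝ (Fin d))) =
      {u : EuclideanSpace ℝ (Fin d) | ∑ i, u i = δ})
    (ω : EuclideanSpace ℝ (Fin d) → ℝ)
    (D : Set (EuclideanSpace ℝ (Fin d) × ℝ))
    (hD : D = {p : EuclideanSpace ℝ (Fin d) × ℝ | ∀ u ∈ A, p.2 ≤ ω u + inner ℝ u p.1}) :
    {v : EuclideanSpace ℝ (Fin d) × ℝ | ∀ p ∈ D, ∀ t : ℝ, p + t • v ∈ D} =
      {v : EuclideanSpace ℝ (Fin d) × ℝ |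
        ∃ c : ℝ, v = c • ((WithLp.toLp 2 (fun _ => 1 : Fin d → ℝ) : EuclideanSpace ℝ (Fin d)), δ)} := by
  have hd0 : (d : ℝ) ≠ 0 := by
    simp; omega
  -- inner with the all-ones vector
  have hone : ∀ u : EuclideanSpace ℝ (Fin d), (∑ i, u i = δ) →
      (inner ℝ u (WithLp.toLp 2 (fun _ => 1 : Fin d → ℝ) : EuclideanSpace ℝ (Fin d)) : ℝ) = δ := by
    intro u hu
    rw [← hu]
    simp [PiLp.inner_apply, RCLike.inner_apply]
  -- D is nonempty
  obtain ⟨m, hm⟩ := (hAfin.image ω).bddBelow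
  have hp0 : ((0 : EuclideanSpace ℝ (Fin d)), m) ∈ D := by
    rw [hD]
    intro u hu
    have : m ≤ ω u := hm (Set.mem_image_of_mem ω hu)
    simpa using this
  ext v
  constructor
  · intro hv
    -- for all u ∈ A, inner u v.1 = v.2
    have key : ∀ u ∈ A, (inner ℝ u v.1 : ℝ) = v.2 := by
      intro u hu
      have h1 : ∀ t : ℝ, t * (v.2 - inner ℝ u v.1) ≤ ω u + inner ℝ u (0 : EuclideanSpace ℝ (Fin d)) - m := by
        intro t
        have := hv _ hp0 t
        rw [hD] at this
        have h2 := this u hu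
        simp only [Prod.fst_add, Prod.snd_add, Prod.smul_fst, Prod.smul_snd, smul_eq_mul] at h2
        rw [inner_add_right, real_inner_smul_right] at h2
        nlinarith [h2]
      have := aux_eq_zero h1
      linarith
    -- extend to the whole hyperplane by affine span induction
    have key2 : ∀ q : EuclideanSpace ℝ (Fin d), (∑ i, q i = δ) → (inner ℝ q v.1 : ℝ) = v.2 := by
      intro q hq
      have hq' : q ∈ (affineSpan ℝ A : Set (EuclideanSpace ℝ (Fin d))) := by
        rw [hspan]; exact hq
      refine affineSpan_induction (p := fun q => (inner ℝ q v.1 : ℝ) = v.2) hq' key ?_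
      intro c a b e ha hb he
      have : ((c • (a -ᵥ b) +ᵥ e : EuclideanSpace ℝ (Fin d))) = c • (a - b) + e := rfl
      rw [this, inner_add_left, inner_smul_left, inner_sub_left]
      simp only [RCLike.conj_to_real]
      rw [ha, hb, he]; ring
    -- construct special points
    set i0 : Fin d := ⟨0, hd⟩
    set q0 : EuclideanSpace ℝ (Fin d) := WithLp.toLp 2 (fun _ => δ / d)
    have hq0 : ∑ i, q0 i = δ := by
      simp [q0, Finset.sum_const, Finset.card_univ]
      field_simp
    have hq0' := key2 q0 hq0
    -- each coordinate of v.1 equals v.1 i0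
    have hcoord : ∀ i : Fin d, v.1 i = v.1 i0 := by
      intro i
      set qi : EuclideanSpace ℝ (Fin d) :=
        WithLp.toLp 2 (fun j => δ / d + (if j = i then (1:ℝ) else 0) - (if j = i0 then (1:ℝ) else 0))
      have hqi : ∑ j, qi j = δ := by
        simp only [qi]
        rw [Finset.sum_sub_distrib, Finset.sum_add_distrib]
        simp [Finset.sum_const, Finset.card_univ]
        field_simp
      have h1 := key2 qi hqi
      rw [← hq0'] at h1
      simp only [PiLp.inner_apply, RCLike.inner_apply, RCLike.conj_to_real] at h1
      simp only [mul_comm (v.1.ofLp _)] at h1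
      have hsplit : ∀ j : Fin d, qi j * v.1 j =
          q0 j * v.1 j + (if j = i then v.1 j else 0) - (if j = i0 then v.1 j else 0) := by
        intro j
        simp only [qi, q0]
        by_cases h : j = i <;> by_cases h' : j = i0 <;> simp [h, h'] <;> (try split_ifs) <;> ring
      rw [Finset.sum_congr rfl (fun j _ => hsplit j)] at h1
      rw [Finset.sum_sub_distrib, Finset.sum_add_distrib] at h1
      simp [Finset.sum_ite_eq'] at h1
      linarith
    set c : ℝ := v.1 i0
    have hv1 : v.1 = WithLp.toLp 2 (fun _ => c : Fin d → ℝ) := PiLp.ext fun i => hcoord i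
    have hv2 : v.2 = c * δ := by
      rw [← hq0']
      simp only [PiLp.inner_apply, RCLike.inner_apply, RCLike.conj_to_real, hv1, q0]
      rw [Finset.sum_const, Finset.card_univ, Fintype.card_fin, nsmul_eq_mul]
      field_simp
    refine ⟨c, ?_⟩
    apply Prod.ext
    · rw [hv1]; ext x; simp
    · rw [hv2]; simp [Prod.smul_snd]
  · rintro ⟨c, rfl⟩
    intro p hp t
    rw [hD] at hp ⊢
    intro u hu
    have h1 := hp u hu
    have h2 := hone u (hAsub hu)
    simp only [Prod.fst_add, Prod.snd_add, Prod.smul_fst, Prod.smul_snd, smul_eq_mul]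
    rw [inner_add_right, real_inner_smul_right, real_inner_smul_right, h2]
    nlinarith [h1]
end

section
/- Let d ≥ 1 and n ≥ 1 be natural numbers. Then, in ℝ^d × ℝ, the cone {(x,s) : s ≤ n · min_{1 ≤ i ≤ d} x_i} equals the set {λ • (𝟙, n) + Σ_{i=1}^d μ_i • (e_i, 0) : λ ∈ ℝ, μ_1, …, μ_d ≥ 0}, where 𝟙 = (1,…,1) ∈ ℝ^d and e_i are the standard basis vectors of ℝ^d. In other words, this cone is the sum of the line spanned by (𝟙,n) and the simplicial cone spanned by the rays (e_i, 0) for i = 1, …, d. -/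
/-- The cone {(x,s) : s ≤ n·min_i x_i} in ℝ^d × ℝ is the sum of the line
spanned by (𝟙, n) and the simplicial cone spanned by the rays (e_i, 0), i = 1, …, d. -/
theorem cone_eq_line_plus_simplicial_cone
    (d n : ℕ) (hd : 1 ≤ d) (hn : 1 ≤ n) :
    {p : EuclideanSpace ℝ (Fin d) × ℝ | p.2 ≤ (n : ℝ) * ⨅ i, p.1 i} =
      {p : EuclideanSpace ℝ (Fin d) × ℝ |
        ∃ (l : ℝ) (μ : Fin d → ℝ), (∀ i, 0 ≤ μ i) ∧
          p = l • ((WithLp.toLp 2 (fun _ => 1), (n : ℝ)) : EuclideanSpace ℝ (Fin d) × ℝ) +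
            ∑ i, μ i • ((EuclideanSpace.single i (1 : ℝ), 0) : EuclideanSpace ℝ (Fin d) × ℝ)} := by
  haveI : Nonempty (Fin d) := ⟨⟨0, hd⟩⟩
  have hn0 : (0 : ℝ) < n := by exact_mod_cast hn
  have key : ∀ (l : ℝ) (μ : Fin d → ℝ),
      (l • ((WithLp.toLp 2 (fun _ => 1), (n : ℝ)) : EuclideanSpace ℝ (Fin d) × ℝ) +
        ∑ i, μ i • ((EuclideanSpace.single i (1 : ℝ), 0) : EuclideanSpace ℝ (Fin d) × ℝ))
      = ((WithLp.toLp 2 (fun j => l + μ j) : EuclideanSpace ℝ (Fin d)), l * n) := by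
    intro l μ
    apply Prod.ext
    · rw [Prod.fst_add, Prod.smul_fst, Prod.fst_sum]
      simp only [Prod.smul_fst]
      ext j
      have : (∑ i, μ i • EuclideanSpace.single i (1 : ℝ)) j = μ j := by
        rw [WithLp.ofLp_sum, Fintype.sum_apply]
        simp [EuclideanSpace.single_apply, Finset.sum_ite_eq']
      simp [this, PiLp.add_apply, PiLp.smul_apply]
    · rw [Prod.snd_add, Prod.smul_snd, Prod.snd_sum]
      simp [smul_eq_mul]
  ext p
  simp only [Set.mem_setOf_eq]
  constructor
  · intro hp
    refine ⟨p.2 / n, fun i => p.1 i - p.2 / n, ?_, ?_⟩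
    · intro i
      have h1 : p.2 / n ≤ ⨅ i, p.1 i := by
        rw [div_le_iff₀ hn0, mul_comm]; exact hp
      have h2 : (⨅ i, p.1 i) ≤ p.1 i := by
        apply ciInf_le
        exact Set.Finite.bddBelow (Set.finite_range _)
      linarith
    · rw [key]
      ext j
      · simp
      · show p.2 = p.2 / n * n
        field_simp
  · rintro ⟨l, μ, hμ, rfl⟩
    rw [key]
    simp only
    have : l ≤ ⨅ j, (l + μ j) := by
      apply le_ciInf
      intro j; linarith [hμ j]
    calc l * n = n * l := mul_comm _ _
      _ ≤ n * ⨅ j, (l + μ j) := by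
          exact mul_le_mul_of_nonneg_left this (le_of_lt hn0)
end

section
/- Let d ≥ 1 and n ≥ 1, and let V be a real d × n matrix, V : Fin d → Fin n → ℝ. Consider the dome of the product of tropical linear forms, D(V) = {(x,s) ∈ ℝ^d × ℝ : s ≤ Σ_{j=1}^n min_{1 ≤ i ≤ d} (x_i − V_{ij})}. Then the recession cone of D(V) equals {(x,s) ∈ ℝ^d × ℝ : s ≤ n · min_{1 ≤ i ≤ d} x_i}; that is, {v : ∀ p ∈ D(V), ∀ t ≥ 0, p + t•v ∈ D(V)} = {(x,s) : s ≤ n·min_i x_i}. -/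
/-- The recession cone of the dome of a product of n min-tropical linear
forms on ℝ^d equals {(x,s) : s ≤ n·min_i x_i}. -/
theorem recessionCone_dome_of_tropical_hyperplane_arrangement
    (d n : ℕ) (hd : 1 ≤ d) (hn : 1 ≤ n)
    (V : Fin d → Fin n → ℝ)
    (D : Set (EuclideanSpace ℝ (Fin d) × ℝ))
    (hD : D = {p : EuclideanSpace ℝ (Fin d) × ℝ |
      p.2 ≤ ∑ j : Fin n, ⨅ i : Fin d, (p.1 i - V i j)}) :
    {v : EuclideanSpace ℝ (Fin d) × ℝ | ∀ p ∈ D, ∀ t : ℝ, 0 ≤ t → p + t • v ∈ D} =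
      {p : EuclideanSpace ℝ (Fin d) × ℝ | p.2 ≤ (n : ℝ) * ⨅ i, p.1 i} := by
  haveI : Nonempty (Fin d) := Fin.pos_iff_nonempty.mp hd
  subst hD
  ext v
  simp only [Set.mem_setOf_eq]
  constructor
  · intro h
    obtain ⟨i₀, hi₀⟩ := Finite.exists_min (fun i => v.1 i)
    have hmin : (⨅ i, v.1 i) = v.1 i₀ :=
      le_antisymm (ciInf_le (Finite.bddBelow_range _) i₀) (le_ciInf hi₀)
    rw [hmin]
    set L0 : ℝ := ∑ j : Fin n, ⨅ i : Fin d, ((0 : EuclideanSpace ℝ (Fin d)) i - V i j) with hL0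
    have hp : (((0 : EuclideanSpace ℝ (Fin d)), L0) : EuclideanSpace ℝ (Fin d) × ℝ) ∈
        {p : EuclideanSpace ℝ (Fin d) × ℝ |
          p.2 ≤ ∑ j : Fin n, ⨅ i : Fin d, (p.1 i - V i j)} := by
      simp only [Set.mem_setOf_eq]
      exact le_rfl
    have key : ∀ t : ℝ, 0 ≤ t →
        t * (v.2 - (n : ℝ) * v.1 i₀) ≤ (∑ j : Fin n, (- V i₀ j)) - L0 := by
      intro t ht
      have h1 := h _ hp t ht
      simp only [Set.mem_setOf_eq, Prod.fst_add, Prod.snd_add, Prod.smul_fst, Prod.smul_snd,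
        smul_eq_mul] at h1
      have h2 : ∀ j : Fin n,
          (⨅ i : Fin d, (((0 : EuclideanSpace ℝ (Fin d)) + t • v.1) i - V i j))
            ≤ t * v.1 i₀ - V i₀ j := by
        intro j
        refine le_trans (ciInf_le (Finite.bddBelow_range _) i₀) ?_
        simp [PiLp.add_apply, PiLp.smul_apply, smul_eq_mul]
      have h3 : L0 + t * v.2 ≤ ∑ j : Fin n, (t * v.1 i₀ - V i₀ j) :=
        le_trans h1 (Finset.sum_le_sum fun j _ => h2 j)
      have h4 : ∑ j : Fin n, (t * v.1 i₀ - V i₀ j)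
          = (n : ℝ) * (t * v.1 i₀) + ∑ j : Fin n, (- V i₀ j) := by
        rw [Finset.sum_sub_distrib]
        simp [Finset.sum_neg_distrib, mul_comm]
        ring
      rw [h4] at h3
      ring_nf
      ring_nf at h3
      linarith
    by_contra hcon
    push_neg at hcon
    set a : ℝ := v.2 - (n : ℝ) * v.1 i₀ with ha
    have hapos : 0 < a := by simp [ha]; linarith
    set C : ℝ := (∑ j : Fin n, (- V i₀ j)) - L0 with hC
    have hC0 : 0 ≤ C := by have := key 0 le_rfl; linarith
    have := key ((C + 1) / a) (by positivity)
    have h5 : (C + 1) / a * a = C + 1 := by field_simp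
    linarith
  · intro hv p hp t ht
    simp only [Set.mem_setOf_eq, Prod.fst_add, Prod.snd_add, Prod.smul_fst, Prod.smul_snd,
      smul_eq_mul] at hp ⊢
    have hj : ∀ j : Fin n,
        (⨅ i : Fin d, (p.1 i - V i j)) + t * (⨅ i, v.1 i)
          ≤ ⨅ i : Fin d, ((p.1 + t • v.1) i - V i j) := by
      intro j
      refine le_ciInf fun i => ?_
      have h1 : (⨅ i : Fin d, (p.1 i - V i j)) ≤ p.1 i - V i j :=
        ciInf_le (Finite.bddBelow_range _) i
      have h2 : t * (⨅ i, v.1 i) ≤ t * v.1 i :=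
        mul_le_mul_of_nonneg_left (ciInf_le (Finite.bddBelow_range _) i) ht
      simp only [PiLp.add_apply, PiLp.smul_apply, smul_eq_mul]
      linarith
    calc p.2 + t * v.2 ≤ p.2 + t * ((n : ℝ) * ⨅ i, v.1 i) := by
          have := mul_le_mul_of_nonneg_left hv ht; linarith
      _ ≤ (∑ j : Fin n, ⨅ i : Fin d, (p.1 i - V i j)) + (n : ℝ) * (t * ⨅ i, v.1 i) := by
          linarith
      _ = ∑ j : Fin n, ((⨅ i : Fin d, (p.1 i - V i j)) + t * (⨅ i, v.1 i)) := by
          rw [Finset.sum_add_distrib]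
          simp only [Finset.sum_const, Finset.card_univ, Fintype.card_fin, nsmul_eq_mul]
      _ ≤ ∑ j : Fin n, ⨅ i : Fin d, ((p.1 + t • v.1) i - V i j) :=
          Finset.sum_le_sum fun j _ => hj j
end

section
/- Let d ≥ 1, let U ⊆ ℝ^d be a finite set of nonzero vectors all of whose coordinates are nonnegative, let r : U → ℝ, and let w ∈ ℝ^d. Then there exists ε₀ > 0 such that for every ε with 0 < ε < ε₀ there exists t₀ ∈ ℝ such that for every t < t₀ the following holds: defining, for u ∈ U, λ(u) = (t − r(u) − ⟨u,w⟩ + ε^{d+1}) / (Σ_{i=1}^d u_i ε^i), one has λ(u) < 0 for every u ∈ U, and λ(u) < λ(u') whenever u, u' ∈ U and u is strictly smaller than u' in the lexicographic order on ℝ^d (comparing coordinates in the order 1, 2, …, d). -/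
open Filter Set Topology

private lemma lexS_lemma (d : ℕ) (u u' : EuclideanSpace ℝ (Fin d)) (k : Fin d)
    (hjk : ∀ j : Fin d, j < k → u j = u' j) (hk : u k < u' k) :
    ∀ᶠ ε in 𝓝[>] (0:ℝ),
      (∑ i : Fin d, u i * ε ^ ((i : ℕ) + 1)) < (∑ i : Fin d, u' i * ε ^ ((i : ℕ) + 1)) := by
  classical
  set g : ℝ → ℝ := fun ε =>
    ∑ i : Fin d, (if (k : ℕ) ≤ (i : ℕ) then (u' i - u i) * ε ^ ((i : ℕ) - (k : ℕ)) else 0)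
    with hg
  have hgc : Continuous g := by
    apply continuous_finset_sum
    intro i _
    by_cases h : (k : ℕ) ≤ (i : ℕ)
    · simp only [if_pos h]; fun_prop
    · simp only [if_neg h]; fun_prop
  have hg0 : g 0 = u' k - u k := by
    simp only [hg]
    rw [Finset.sum_eq_single k]
    · simp
    · intro i _ hik
      rcases lt_or_ge (i : ℕ) (k : ℕ) with h | h
      · simp [Nat.not_le.mpr h]
      · have hlt : (k : ℕ) < (i : ℕ) := lt_of_le_of_ne h (fun he => hik (Fin.ext he.symm))
        rw [if_pos h, zero_pow (by omega : (i : ℕ) - (k : ℕ) ≠ 0), mul_zero]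
    · simp
  have key : ∀ ε : ℝ,
      (∑ i : Fin d, u' i * ε ^ ((i : ℕ) + 1)) - (∑ i : Fin d, u i * ε ^ ((i : ℕ) + 1))
        = ε ^ ((k : ℕ) + 1) * g ε := by
    intro ε
    simp only [hg]
    rw [Finset.mul_sum, ← Finset.sum_sub_distrib]
    apply Finset.sum_congr rfl
    intro i _
    rcases le_or_gt (k : ℕ) (i : ℕ) with h | h
    · rw [if_pos h, ← mul_assoc, mul_comm (ε ^ ((k:ℕ)+1)), mul_assoc, ← pow_add]
      have he : (k : ℕ) + 1 + ((i : ℕ) - (k : ℕ)) = (i : ℕ) + 1 := by omega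
      rw [he]; ring
    · rw [if_neg (not_le.mpr h), hjk i (Fin.lt_def.mpr h)]; ring
  have hgpos : ∀ᶠ ε in 𝓝 (0:ℝ), 0 < g ε := by
    have : Tendsto g (𝓝 0) (𝓝 (g 0)) := hgc.continuousAt
    apply this.eventually
    rw [hg0]
    exact eventually_gt_nhds (by linarith)
  have hgpos' : ∀ᶠ ε in 𝓝[>] (0:ℝ), 0 < g ε := eventually_nhdsWithin_of_eventually_nhds hgpos
  filter_upwards [hgpos', self_mem_nhdsWithin] with ε hgε (hε : 0 < ε)
  have := mul_pos (pow_pos hε ((k : ℕ) + 1)) hgε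
  linarith [key ε]

/-- The analytic core of the lexicographic line shelling: for small enough
ε > 0 and sufficiently negative t, the parameters λ(u) at which the line
(w,t) + ℝ·(ε, ε², …, ε^{d+1}) meets the hyperplanes {(x,s) : s = r(u) + ⟨u,x⟩} are all
negative and ordered according to the lexicographic order of the vectors u. -/
theorem lex_line_shelling_parameters
    (d : ℕ) (hd : 1 ≤ d)
    (U : Finset (EuclideanSpace ℝ (Fin d)))
    (hU : ∀ u ∈ U, u ≠ 0 ∧ ∀ i, 0 ≤ u i)
    (r : EuclideanSpace ℝ (Fin d) → ℝ)
    (w : EuclideanSpace ℝ (Fin d)) :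
    ∃ ε₀ : ℝ, 0 < ε₀ ∧ ∀ ε : ℝ, 0 < ε → ε < ε₀ → ∃ t₀ : ℝ, ∀ t : ℝ, t < t₀ →
      (∀ u ∈ U,
        (t - r u - inner ℝ u w + ε ^ (d + 1)) / (∑ i : Fin d, u i * ε ^ ((i : ℕ) + 1)) < 0) ∧
      (∀ u ∈ U, ∀ u' ∈ U,
        (∃ k : Fin d, (∀ j : Fin d, j < k → u j = u' j) ∧ u k < u' k) →
        (t - r u - inner ℝ u w + ε ^ (d + 1)) / (∑ i : Fin d, u i * ε ^ ((i : ℕ) + 1)) <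
          (t - r u' - inner ℝ u' w + ε ^ (d + 1)) / (∑ i : Fin d, u' i * ε ^ ((i : ℕ) + 1))) := by
  classical
  have hSpos : ∀ u ∈ U, ∀ ε : ℝ, 0 < ε → 0 < (∑ i : Fin d, u i * ε ^ ((i : ℕ) + 1)) := by
    intro u hu ε hε
    obtain ⟨hne, hnn⟩ := hU u hu
    obtain ⟨i, hi⟩ : ∃ i, u i ≠ 0 := by
      by_contra h
      push_neg at h
      exact hne (by ext j; simpa using h j)
    refine Finset.sum_pos' (fun j _ => mul_nonneg (hnn j) (le_of_lt (pow_pos hε _)))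
      ⟨i, Finset.mem_univ i, mul_pos ((hnn i).lt_of_ne (Ne.symm hi)) (pow_pos hε _)⟩
  have hlex : ∀ᶠ ε in 𝓝[>] (0:ℝ), ∀ u ∈ U, ∀ u' ∈ U,
      (∃ k : Fin d, (∀ j : Fin d, j < k → u j = u' j) ∧ u k < u' k) →
      (∑ i : Fin d, u i * ε ^ ((i : ℕ) + 1)) < (∑ i : Fin d, u' i * ε ^ ((i : ℕ) + 1)) := by
    rw [Filter.eventually_all_finset]
    intro u hu
    rw [Filter.eventually_all_finset]
    intro u' hu'
    by_cases hL : ∃ k : Fin d, (∀ j : Fin d, j < k → u j = u' j) ∧ u k < u' k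
    · obtain ⟨k, hjk, hk⟩ := hL
      filter_upwards [lexS_lemma d u u' k hjk hk] with ε hε _
      exact hε
    · filter_upwards with ε h
      exact absurd h hL
  rcases mem_nhdsGT_iff_exists_Ioo_subset.mp hlex with ⟨ε₀, hε₀, hsub⟩
  refine ⟨ε₀, hε₀, ?_⟩
  intro ε hε hεε₀
  have hP := hsub ⟨hε, hεε₀⟩
  have ht : ∀ᶠ t in atBot,
      (∀ u ∈ U,
        (t - r u - inner ℝ u w + ε ^ (d + 1)) / (∑ i : Fin d, u i * ε ^ ((i : ℕ) + 1)) < 0) ∧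
      (∀ u ∈ U, ∀ u' ∈ U,
        (∃ k : Fin d, (∀ j : Fin d, j < k → u j = u' j) ∧ u k < u' k) →
        (t - r u - inner ℝ u w + ε ^ (d + 1)) / (∑ i : Fin d, u i * ε ^ ((i : ℕ) + 1)) <
          (t - r u' - inner ℝ u' w + ε ^ (d + 1)) / (∑ i : Fin d, u' i * ε ^ ((i : ℕ) + 1))) := by
    apply Filter.Eventually.and
    · rw [Filter.eventually_all_finset]
      intro u hu
      filter_upwards [eventually_lt_atBot (r u + inner ℝ u w - ε ^ (d + 1))] with t hti
      exact div_neg_of_neg_of_pos (by linarith) (hSpos u hu ε hε)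
    · rw [Filter.eventually_all_finset]
      intro u hu
      rw [Filter.eventually_all_finset]
      intro u' hu'
      by_cases hL : ∃ k : Fin d, (∀ j : Fin d, j < k → u j = u' j) ∧ u k < u' k
      · have hS : (∑ i : Fin d, u i * ε ^ ((i : ℕ) + 1)) < (∑ i : Fin d, u' i * ε ^ ((i : ℕ) + 1)) :=
          hP u hu u' hu' hL
        have hSu := hSpos u hu ε hε
        have hSu' := hSpos u' hu' ε hε
        set A := (∑ i : Fin d, u i * ε ^ ((i : ℕ) + 1))
        set B := (∑ i : Fin d, u' i * ε ^ ((i : ℕ) + 1))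
        filter_upwards [eventually_lt_atBot
          (((r u + inner ℝ u w - ε ^ (d + 1)) * B - (r u' + inner ℝ u' w - ε ^ (d + 1)) * A)
            / (B - A))] with t htB _
        rw [div_lt_div_iff₀ hSu hSu']
        have h2 := (lt_div_iff₀ (by linarith : (0:ℝ) < B - A)).mp htB
        nlinarith [h2]
      · filter_upwards with t h
        exact absurd h hL
  rw [Filter.eventually_atBot] at ht
  obtain ⟨t₀, ht₀⟩ := ht
  exact ⟨t₀, fun t htt => ht₀ t htt.le⟩
end

section
/- Let d ≥ 1 and n ≥ 1, and let V be a real d × n matrix, V : Fin d → Fin n → ℝ. Then the max-tropical column span of V, namely the set T = {x ∈ ℝ^d : ∃ λ : Fin n → ℝ such that x_i = max_{1 ≤ j ≤ n} (λ_j + V_{ij}) for all i}, equipped with the subspace topology, is a nonempty contractible topological space. -/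
section Aux

variable {d n : ℕ} (V : Fin d → Fin n → ℝ)

/-- Tropical evaluation map. -/
noncomputable def tropPhi [NeZero n] (lam : Fin n → ℝ) : EuclideanSpace ℝ (Fin d) :=
  WithLp.toLp 2 (fun i => ⨆ j, (lam j + V i j))

/-- Canonical section (residuation). -/
noncomputable def tropSec [NeZero d] (x : EuclideanSpace ℝ (Fin d)) : Fin n → ℝ :=
  fun j => ⨅ i, (x i - V i j)

lemma tropPhi_apply [NeZero n] (lam : Fin n → ℝ) (i : Fin d) :
    tropPhi V lam i = Finset.univ.sup' Finset.univ_nonempty (fun j => lam j + V i j) := by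
  rw [Finset.sup'_univ_eq_ciSup]; rfl

lemma tropSec_apply [NeZero d] (x : EuclideanSpace ℝ (Fin d)) (j : Fin n) :
    tropSec V x j = Finset.univ.inf' Finset.univ_nonempty (fun i => x i - V i j) := by
  rw [Finset.inf'_univ_eq_ciInf]; rfl

lemma tropPhi_continuous [NeZero n] : Continuous (tropPhi V) := by
  apply continuous_induced_rng.2
  apply continuous_pi
  intro i
  simp only [Function.comp_apply, tropPhi_apply]
  exact Continuous.finset_sup'_apply Finset.univ_nonempty
    (fun j _ => (continuous_apply j).add continuous_const)

lemma tropSec_continuous [NeZero d] : Continuous (tropSec V) := by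
  apply continuous_pi
  intro j
  simp only [tropSec_apply]
  exact Continuous.finset_inf'_apply Finset.univ_nonempty
    (fun i _ => (PiLp.continuous_apply _ _ i).sub continuous_const)

lemma tropPhi_tropSec [NeZero n] [NeZero d] (x : EuclideanSpace ℝ (Fin d))
    (lam : Fin n → ℝ) (hx : ∀ i, x i = ⨆ j, (lam j + V i j)) :
    tropPhi V (tropSec V x) = x := by
  ext i
  rw [tropPhi_apply]
  apply le_antisymm
  · apply Finset.sup'_le
    intro j _
    have h1 : tropSec V x j ≤ x i - V i j := by
      rw [tropSec_apply]
      exact Finset.inf'_le _ (Finset.mem_univ i)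
    linarith
  · have hx' : ∀ k, x k = Finset.univ.sup' Finset.univ_nonempty (fun j => lam j + V k j) := by
      intro k; rw [hx k, Finset.sup'_univ_eq_ciSup]
    obtain ⟨j0, _, hj0⟩ := Finset.exists_mem_eq_sup' (Finset.univ_nonempty (α := Fin n))
      (fun j => lam j + V i j)
    have hle : lam j0 ≤ tropSec V x j0 := by
      rw [tropSec_apply]
      apply Finset.le_inf'
      intro k _
      have : lam j0 + V k j0 ≤ x k := by
        rw [hx' k]
        exact Finset.le_sup' (fun j => lam j + V k j) (Finset.mem_univ j0)
      linarith
    calc x i = lam j0 + V i j0 := by rw [hx' i, hj0]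
      _ ≤ tropSec V x j0 + V i j0 := by linarith
      _ ≤ Finset.univ.sup' Finset.univ_nonempty (fun j => tropSec V x j + V i j) :=
          Finset.le_sup' (fun j => tropSec V x j + V i j) (Finset.mem_univ j0)

end Aux

/-- A max-tropical polytope (the max-tropical column span of a real d×n
matrix) is nonempty and contractible. -/
theorem tropical_polytope_nonempty_contractible
    (d n : ℕ) (hd : 1 ≤ d) (hn : 1 ≤ n)
    (V : Fin d → Fin n → ℝ)
    (T : Set (EuclideanSpace ℝ (Fin d)))
    (hT : T = {x : EuclideanSpace ℝ (Fin d) |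
      ∃ lam : Fin n → ℝ, ∀ i, x i = ⨆ j, (lam j + V i j)}) :
    T.Nonempty ∧ ContractibleSpace T := by
  subst hT
  haveI : NeZero n := ⟨Nat.one_le_iff_ne_zero.mp hn⟩
  haveI : NeZero d := ⟨Nat.one_le_iff_ne_zero.mp hd⟩
  have hmem : ∀ lam : Fin n → ℝ, tropPhi V lam ∈
      {x : EuclideanSpace ℝ (Fin d) | ∃ lam : Fin n → ℝ, ∀ i, x i = ⨆ j, (lam j + V i j)} :=
    fun lam => ⟨lam, fun i => rfl⟩
  constructor
  · exact ⟨tropPhi V 0, hmem 0⟩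
  · -- T is a retract of ℝⁿ, which is contractible
    let P : Set (EuclideanSpace ℝ (Fin d)) :=
      {x : EuclideanSpace ℝ (Fin d) | ∃ lam : Fin n → ℝ, ∀ i, x i = ⨆ j, (lam j + V i j)}
    let Φ : C((Fin n → ℝ), P) :=
      ⟨fun lam => ⟨tropPhi V lam, hmem lam⟩,
        Continuous.subtype_mk (tropPhi_continuous V) _⟩
    let S : C(P, Fin n → ℝ) :=
      ⟨fun x => tropSec V x.val, (tropSec_continuous V).comp continuous_subtype_val⟩
    have hid : Φ.comp S = ContinuousMap.id _ := by
      apply ContinuousMap.ext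
      intro x
      apply Subtype.ext
      obtain ⟨lam, hlam⟩ := x.2
      exact tropPhi_tropSec V x.val lam hlam
    rw [contractible_iff_id_nullhomotopic]
    have hΦ : Φ.Nullhomotopic := by
      have := id_nullhomotopic (Fin n → ℝ)
      simpa using this.comp_right Φ
    rw [← hid]
    exact hΦ.comp_left S
end
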